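/- arXiv:1509.04381 — 7 statements merged into one kernel-verified Lean document; each statement's English description precedes it below -/
import Mathlib

section
/- Lower estimate for the error of optimal recovery of an odd operator matrix: Suppose for all i = 1,…,l and j = 1,…,m the map A_{ij} : X_j → Y_i is odd (A_{ij}(−x) = −A_{ij}(x)), each class W_j ⊆ X_j is centrally symmetric, each U_j ⊆ Z_j is nonempty, and the set W̄(Ū) := { x̄ ∈ W̄ : (Ī x̄ + Ū) ∩ (Ī(−x̄) + Ū) ≠ ∅ } is nonempty. Then the error of optimal recovery satisfies E_ψ(Ā; W̄; Ī; Ū) ≥ sup_{x̄ ∈ W̄(Ū)} ‖Ā x̄‖_ψ. -/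
open scoped ENNReal

/-- Lower estimate for the error of optimal recovery of an odd operator matrix
(Proposition 1 of the paper). -/
theorem optimal_recovery_lower_estimate_general
    {m l : ℕ}
    (X : Fin m → Type*) [∀ j, AddCommGroup (X j)] [∀ j, Module ℝ (X j)]
    (Y : Fin l → Type*) [∀ i, NormedAddCommGroup (Y i)] [∀ i, NormedSpace ℝ (Y i)]
    (Z : Fin m → Type*) [∀ j, AddCommGroup (Z j)] [∀ j, Module ℝ (Z j)]
    (ψ : (Fin l → ℝ) → ℝ)
    (hψ_nonneg : ∀ v, 0 ≤ ψ v)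
    (hψ_eq_zero : ∀ v, ψ v = 0 ↔ v = 0)
    (hψ_add : ∀ v w, ψ (v + w) ≤ ψ v + ψ w)
    (hψ_smul : ∀ (c : ℝ) (v : Fin l → ℝ), ψ (c • v) = |c| * ψ v)
    (hψ_mono : ∀ v w : Fin l → ℝ, (∀ i, 0 ≤ v i) → (∀ i, v i ≤ w i) → ψ v ≤ ψ w)
    (A : ∀ (i : Fin l) (j : Fin m), X j → Y i)
    (hA_odd : ∀ i j (x : X j), A i j (-x) = -(A i j x))
    (I : ∀ j : Fin m, X j → Z j)
    (W : ∀ j : Fin m, Set (X j))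
    (hW_symm : ∀ j, ∀ x ∈ W j, -x ∈ W j)
    (U : ∀ j : Fin m, Set (Z j))
    (hU_ne : ∀ j, (U j).Nonempty) :
    -- the operator matrix, the ψ-norm, the class, the available data, and the set W̄(Ū)
    let Abar : (∀ j, X j) → ∀ i, Y i := fun x i => ∑ j, A i j (x j)
    let normψ : (∀ i, Y i) → ℝ := fun y => ψ fun i => ‖y i‖
    let Wbar : Set (∀ j, X j) := {x | ∀ j, x j ∈ W j}
    let Data : (∀ j, X j) → Set (∀ j, Z j) :=
      fun x => {z | ∀ j, ∃ u ∈ U j, z j = I j (x j) + u}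
    let WU : Set (∀ j, X j) := {x | x ∈ Wbar ∧ (Data x ∩ Data (-x)).Nonempty}
    WU.Nonempty →
      (⨆ x ∈ WU, ENNReal.ofReal (normψ (Abar x))) ≤
        ⨅ Φ : (∀ j, Z j) → ∀ i, Y i,
          ⨆ x ∈ Wbar, ⨆ z ∈ Data x, ENNReal.ofReal (normψ (Abar x - Φ z)) := by

  intro Abar normψ Wbar Data WU hne
  refine le_iInf fun Φ => ?_
  refine iSup₂_le fun x hx => ?_
  obtain ⟨z, hzx, hznx⟩ := hx.2
  have hxW : x ∈ Wbar := hx.1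
  have hnxW : (-x) ∈ Wbar := fun j => by simpa using hW_symm j (x j) (hxW j)
  have hAbar_neg : Abar (-x) = -(Abar x) := by
    funext i
    simp only [Abar, Pi.neg_apply]
    rw [← Finset.sum_neg_distrib]
    exact Finset.sum_congr rfl fun j _ => by simpa using hA_odd i j (x j)
  set t1 := normψ (Abar x - Φ z) with ht1
  set t2 := normψ (Abar (-x) - Φ z) with ht2
  have e2 : ∀ i, ‖(Abar x - Φ z) i - (Abar (-x) - Φ z) i‖ = 2 * ‖Abar x i‖ := by
    intro i
    have h : (Abar x - Φ z) i - (Abar (-x) - Φ z) i = (2:ℝ) • Abar x i := by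
      rw [hAbar_neg]
      simp only [Pi.sub_apply, Pi.neg_apply, two_smul]
      abel
    rw [h, norm_smul]
    norm_num
  have key : normψ (Abar x) ≤ max t1 t2 := by
    have h2 : 2 * normψ (Abar x) ≤ t1 + t2 := by
      calc 2 * normψ (Abar x) = ψ ((2:ℝ) • fun i => ‖Abar x i‖) := by
            rw [hψ_smul]; norm_num; rfl
        _ = ψ (fun i => ‖(Abar x - Φ z) i - (Abar (-x) - Φ z) i‖) := by
            congr 1; funext i; rw [e2 i]; simp
        _ ≤ ψ ((fun i => ‖(Abar x - Φ z) i‖) + fun i => ‖(Abar (-x) - Φ z) i‖) :=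
            hψ_mono _ _ (fun i => norm_nonneg _) (fun i => norm_sub_le _ _)
        _ ≤ t1 + t2 := hψ_add _ _
    have := le_max_left t1 t2
    have := le_max_right t1 t2
    linarith
  set S := ⨆ x ∈ Wbar, ⨆ z ∈ Data x, ENNReal.ofReal (normψ (Abar x - Φ z)) with hS
  have hS1 : ENNReal.ofReal t1 ≤ S := by
    calc ENNReal.ofReal t1 ≤ ⨆ z ∈ Data x, ENNReal.ofReal (normψ (Abar x - Φ z)) :=
          le_iSup₂ (f := fun z (_ : z ∈ Data x) => ENNReal.ofReal (normψ (Abar x - Φ z))) z hzx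
      _ ≤ S := le_iSup₂ (f := fun x (_ : x ∈ Wbar) => ⨆ z ∈ Data x, ENNReal.ofReal (normψ (Abar x - Φ z))) x hxW
  have hS2 : ENNReal.ofReal t2 ≤ S := by
    calc ENNReal.ofReal t2 ≤ ⨆ z ∈ Data (-x), ENNReal.ofReal (normψ (Abar (-x) - Φ z)) :=
          le_iSup₂ (f := fun z (_ : z ∈ Data (-x)) => ENNReal.ofReal (normψ (Abar (-x) - Φ z))) z hznx
      _ ≤ S := le_iSup₂ (f := fun x (_ : x ∈ Wbar) => ⨆ z ∈ Data x, ENNReal.ofReal (normψ (Abar x - Φ z))) (-x) hnxW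
  calc ENNReal.ofReal (normψ (Abar x)) ≤ ENNReal.ofReal (max t1 t2) :=
        ENNReal.ofReal_le_ofReal key
    _ = max (ENNReal.ofReal t1) (ENNReal.ofReal t2) :=
        by
          rcases le_total t1 t2 with h | h
          · rw [max_eq_right h, max_eq_right (ENNReal.ofReal_le_ofReal h)]
          · rw [max_eq_left h, max_eq_left (ENNReal.ofReal_le_ofReal h)]
    _ ≤ S := max_le hS1 hS2
end

section
/- Optimal recovery of the identity operator on a normed lattice: Let X be a normed lattice, Z a real vector space, W ⊆ X a centrally symmetric class, I : X → Z an odd information map, and U ⊆ Z a nonempty centrally symmetric set. Suppose there exist a map L : Z → X and an element φ ∈ W with Iφ ∈ U such that for all x ∈ W and z ∈ Z, z ∈ Ix + U implies −φ ≤ x − Lz ≤ φ. Then L is an optimal method of recovery of the identity operator id_X on the class W based on information I with U-error, and E(id_X; W; I; U) = E(id_X; W; I; U; L) = ‖φ‖_X. -/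
open scoped ENNReal

/-- Optimal recovery of the identity operator on a normed lattice
(Proposition 3 of the paper). -/
theorem optimal_recovery_identity
    {X Z : Type*} [NormedAddCommGroup X] [Lattice X] [HasSolidNorm X] [IsOrderedAddMonoid X] [NormedSpace ℝ X]
    [AddCommGroup Z] [Module ℝ Z]
    (W : Set X) (hW_symm : ∀ x ∈ W, -x ∈ W)
    (I : X → Z) (hI_odd : ∀ x : X, I (-x) = -(I x))
    (U : Set Z) (hU_ne : U.Nonempty) (hU_symm : ∀ u ∈ U, -u ∈ U)
    (L : Z → X) (φ : X) (hφW : φ ∈ W) (hφU : I φ ∈ U)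
    (hL : ∀ x ∈ W, ∀ z : Z, (∃ u ∈ U, z = I x + u) → -φ ≤ x - L z ∧ x - L z ≤ φ) :
    let Err : (Z → X) → ℝ≥0∞ := fun Φ =>
      ⨆ x ∈ W, ⨆ z : Z, ⨆ (_ : ∃ u ∈ U, z = I x + u), ENNReal.ofReal ‖x - Φ z‖
    (⨅ Φ : Z → X, Err Φ) = Err L ∧ Err L = ENNReal.ofReal ‖φ‖ := by
  intro Err
  -- Upper bound on Err L
  have hub : Err L ≤ ENNReal.ofReal ‖φ‖ := by
    refine iSup₂_le fun x hx => iSup_le fun z => iSup_le fun hz => ?_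
    obtain ⟨h1, h2⟩ := hL x hx z hz
    have habs : |x - L z| ≤ |φ| := abs_le_abs h2 (neg_le.mpr h1)
    exact ENNReal.ofReal_le_ofReal (HasSolidNorm.solid habs)
  -- Lower bound for any Φ
  have hlb : ∀ Φ : Z → X, ENNReal.ofReal ‖φ‖ ≤ Err Φ := by
    intro Φ
    have hz1 : (∃ u ∈ U, (0 : Z) = I φ + u) :=
      ⟨-(I φ), hU_symm _ hφU, by abel⟩
    have hz2 : (∃ u ∈ U, (0 : Z) = I (-φ) + u) :=
      ⟨I φ, hφU, by rw [hI_odd]; abel⟩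
    have hA : ENNReal.ofReal ‖φ - Φ 0‖ ≤ Err Φ :=
      le_iSup₂_of_le φ hφW (le_iSup_of_le (0 : Z) (le_iSup_of_le hz1 le_rfl))
    have hB : ENNReal.ofReal ‖-φ - Φ 0‖ ≤ Err Φ :=
      le_iSup₂_of_le (-φ) (hW_symm _ hφW)
        (le_iSup_of_le (0 : Z) (le_iSup_of_le hz2 le_rfl))
    have hmax : ‖φ‖ ≤ max ‖φ - Φ 0‖ ‖-φ - Φ 0‖ := by
      have h2 : ‖φ‖ + ‖φ‖ ≤ ‖φ - Φ 0‖ + ‖-φ - Φ 0‖ := by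
        have : ‖(φ - Φ 0) - (-φ - Φ 0)‖ ≤ ‖φ - Φ 0‖ + ‖-φ - Φ 0‖ :=
          norm_sub_le _ _
        have heq : (φ - Φ 0) - (-φ - Φ 0) = φ + φ := by abel
        calc ‖φ‖ + ‖φ‖ = ‖φ + φ‖ := by
              rw [← two_smul ℝ φ, norm_smul]; simp [two_mul]
          _ ≤ _ := heq ▸ this
      rcases le_total ‖φ - Φ 0‖ ‖-φ - Φ 0‖ with h | h
      · exact le_max_of_le_right (by linarith)
      · exact le_max_of_le_left (by linarith)
    calc ENNReal.ofReal ‖φ‖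
        ≤ max (ENNReal.ofReal ‖φ - Φ 0‖) (ENNReal.ofReal ‖-φ - Φ 0‖) := by
          rcases max_cases ‖φ - Φ 0‖ ‖-φ - Φ 0‖ with ⟨he, _⟩ | ⟨he, _⟩ <;>
            [exact le_max_of_le_left (ENNReal.ofReal_le_ofReal (he ▸ hmax));
             exact le_max_of_le_right (ENNReal.ofReal_le_ofReal (he ▸ hmax))]
      _ ≤ Err Φ := max_le hA hB
  have hEL : Err L = ENNReal.ofReal ‖φ‖ := le_antisymm hub (hlb L)
  refine ⟨le_antisymm (iInf_le _ L) (le_iInf fun Φ => hEL ▸ hlb Φ), hEL⟩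
end

section
/- Optimal recovery of a positive operator: Let X be a normed lattice, Z a real vector space, W ⊆ X a centrally symmetric class, I : X → Z an odd information map, and U ⊆ Z a nonempty centrally symmetric set. Suppose there exist a map L : Z → X and an element φ ∈ W with Iφ ∈ U such that for all x ∈ W and z ∈ Z, z ∈ Ix + U implies −φ ≤ x − Lz ≤ φ. Let Y be a normed lattice and A : X → Y a positive linear operator. Then Φ = A ∘ L is an optimal method of recovery of A on the class W based on information I with U-error, and E(A; W; I; U) = E(A; W; I; U; A ∘ L) = ‖Aφ‖_Y. -/
open scoped ENNReal

/-- Optimal recovery of a positive linear operator between normed lattices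
(Proposition 4 of the paper). -/
theorem optimal_recovery_positive_operator
    {X Z Y : Type*} [NormedAddCommGroup X] [Lattice X] [HasSolidNorm X]
      [IsOrderedAddMonoid X] [NormedSpace ℝ X]
    [AddCommGroup Z] [Module ℝ Z]
    [NormedAddCommGroup Y] [Lattice Y] [HasSolidNorm Y]
      [IsOrderedAddMonoid Y] [NormedSpace ℝ Y]
    (W : Set X) (hW_symm : ∀ x ∈ W, -x ∈ W)
    (I : X → Z) (hI_odd : ∀ x : X, I (-x) = -(I x))
    (U : Set Z) (hU_ne : U.Nonempty) (hU_symm : ∀ u ∈ U, -u ∈ U)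
    (L : Z → X) (φ : X) (hφW : φ ∈ W) (hφU : I φ ∈ U)
    (hL : ∀ x ∈ W, ∀ z : Z, (∃ u ∈ U, z = I x + u) → -φ ≤ x - L z ∧ x - L z ≤ φ)
    (A : X →ₗ[ℝ] Y) (hA_pos : ∀ x : X, 0 ≤ x → 0 ≤ A x) :
    let Err : (Z → Y) → ℝ≥0∞ := fun Φ =>
      ⨆ x ∈ W, ⨆ z : Z, ⨆ (_ : ∃ u ∈ U, z = I x + u), ENNReal.ofReal ‖A x - Φ z‖
    (⨅ Φ : Z → Y, Err Φ) = Err (fun z => A (L z)) ∧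
      Err (fun z => A (L z)) = ENNReal.ofReal ‖A φ‖ := by
  intro Err
  -- pointwise bound for the method A ∘ L
  have key : ∀ x ∈ W, ∀ z : Z, (∃ u ∈ U, z = I x + u) → ‖A x - A (L z)‖ ≤ ‖A φ‖ := by
    intro x hx z hz
    obtain ⟨h1, h2⟩ := hL x hx z hz
    have hA1 : A x - A (L z) ≤ A φ := by
      have h := hA_pos _ (sub_nonneg.mpr h2)
      rwa [map_sub, map_sub, sub_nonneg] at h
    have hA2 : -(A x - A (L z)) ≤ A φ := by
      have h := hA_pos _ (sub_nonneg.mpr (neg_le.mp h1))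
      rwa [map_sub, map_neg, map_sub, sub_nonneg] at h
    exact HasSolidNorm.solid (abs_le_abs hA1 hA2)
  -- upper bound for Err (A ∘ L)
  have upper : Err (fun z => A (L z)) ≤ ENNReal.ofReal ‖A φ‖ := by
    refine iSup₂_le fun x hx => iSup_le fun z => iSup_le fun hz => ?_
    exact ENNReal.ofReal_le_ofReal (key x hx z hz)
  -- lower bound for any method
  have lower : ∀ Φ : Z → Y, ENNReal.ofReal ‖A φ‖ ≤ Err Φ := by
    intro Φ
    have hz1 : ∃ u ∈ U, (0 : Z) = I φ + u :=
      ⟨-(I φ), hU_symm _ hφU, by simp⟩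
    have hz2 : ∃ u ∈ U, (0 : Z) = I (-φ) + u :=
      ⟨I φ, hφU, by rw [hI_odd]; simp⟩
    have e1 : ENNReal.ofReal ‖A φ - Φ 0‖ ≤ Err Φ := by
      refine le_trans ?_ (le_iSup₂_of_le φ hφW (le_iSup_of_le (0 : Z) le_rfl))
      exact le_iSup (fun _ : ∃ u ∈ U, (0 : Z) = I φ + u => ENNReal.ofReal ‖A φ - Φ 0‖) hz1
    have e2 : ENNReal.ofReal ‖A (-φ) - Φ 0‖ ≤ Err Φ := by
      refine le_trans ?_ (le_iSup₂_of_le (-φ) (hW_symm φ hφW) (le_iSup_of_le (0 : Z) le_rfl))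
      exact le_iSup (fun _ : ∃ u ∈ U, (0 : Z) = I (-φ) + u =>
        ENNReal.ofReal ‖A (-φ) - Φ 0‖) hz2
    have hreal : ‖A φ‖ ≤ max ‖A φ - Φ 0‖ ‖A (-φ) - Φ 0‖ := by
      have h2 : ‖A (-φ) - Φ 0‖ = ‖A φ + Φ 0‖ := by
        rw [map_neg]
        rw [show -(A φ) - Φ 0 = -(A φ + Φ 0) by abel]
        rw [norm_neg]
      rw [h2]
      have := norm_add_le (A φ - Φ 0) (A φ + Φ 0)
      rw [show A φ - Φ 0 + (A φ + Φ 0) = A φ + A φ by abel] at this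
      have h2n : ‖A φ + A φ‖ = 2 * ‖A φ‖ := by
        rw [show A φ + A φ = (2 : ℝ) • A φ by module, norm_smul]
        simp
      rw [h2n] at this
      rcases le_max_iff.mp (le_refl (max ‖A φ - Φ 0‖ ‖A φ + Φ 0‖)) with h | h
      all_goals cases' max_cases ‖A φ - Φ 0‖ ‖A φ + Φ 0‖ with hc hc <;>
        [rw [hc.1]; rw [hc.1]] <;> linarith [hc.2]
    calc ENNReal.ofReal ‖A φ‖
        ≤ ENNReal.ofReal (max ‖A φ - Φ 0‖ ‖A (-φ) - Φ 0‖) :=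
          ENNReal.ofReal_le_ofReal hreal
      _ = max (ENNReal.ofReal ‖A φ - Φ 0‖) (ENNReal.ofReal ‖A (-φ) - Φ 0‖) := by
          rcases max_cases ‖A φ - Φ 0‖ ‖A (-φ) - Φ 0‖ with hc | hc <;>
            rw [hc.1] <;> symm <;>
            [exact max_eq_left (ENNReal.ofReal_le_ofReal hc.2);
             exact max_eq_right (ENNReal.ofReal_le_ofReal hc.2.le)]
      _ ≤ Err Φ := max_le e1 e2
  have eq2 : Err (fun z => A (L z)) = ENNReal.ofReal ‖A φ‖ :=
    le_antisymm upper (lower _)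
  refine ⟨le_antisymm (iInf_le _ _) (le_iInf fun Φ => ?_), eq2⟩
  exact le_trans (le_of_eq eq2) (lower Φ)
end

section
/- Optimal recovery of a matrix of positive operators with sign changes: Let X_1,…,X_m be ordered real vector spaces, Z_1,…,Z_m real vector spaces, Y_1,…,Y_l normed lattices, A_{ij} : X_j → Y_i positive linear operators, I_j : X_j → Z_j odd information maps, W_j ⊆ X_j centrally symmetric classes, and U_j ⊆ Z_j centrally symmetric sets. Suppose that for every j = 1,…,m there exist a map L_j : Z_j → X_j and an element φ_j ∈ W_j with I_j φ_j ∈ U_j such that for all x̄ ∈ W̄ and z̄ ∈ Z̄, z̄ ∈ Ī x̄ + Ū implies −φ_j ≤ x_j − L_j z_j ≤ φ_j for every j. Then for every choice of signs σ_1,…,σ_m ∈ {−1,1}, with σ := diag(σ_1,…,σ_m), the map Φ = Ā σ L̄ (where L̄ = diag(L_1,…,L_m)) is an optimal method of recovery of the operator Ā σ on the class W̄ based on information Ī with Ū-error, and E_ψ(Ā σ; W̄; Ī; Ū) = E_ψ(Ā σ; W̄; Ī; Ū; Φ) = ‖Ā φ̄‖_ψ, where φ̄ = (φ_1,…,φ_m).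 -/
open scoped ENNReal

/-- Optimal recovery of a matrix of positive linear operators with sign changes
(Theorem 1 of the paper). -/
theorem optimal_recovery_matrix_positive_operators
    {m l : ℕ}
    (X : Fin m → Type*) [∀ j, AddCommGroup (X j)] [∀ j, PartialOrder (X j)]
    [∀ j, IsOrderedAddMonoid (X j)] [∀ j, Module ℝ (X j)]
    [∀ j, PosSMulStrictMono ℝ (X j)] [∀ j, PosSMulReflectLT ℝ (X j)]
    (Z : Fin m → Type*) [∀ j, AddCommGroup (Z j)] [∀ j, Module ℝ (Z j)]
    (Y : Fin l → Type*) [∀ i, NormedAddCommGroup (Y i)] [∀ i, Lattice (Y i)]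
    [∀ i, HasSolidNorm (Y i)] [∀ i, IsOrderedAddMonoid (Y i)] [∀ i, NormedSpace ℝ (Y i)]
    (ψ : (Fin l → ℝ) → ℝ)
    (hψ_nonneg : ∀ v, 0 ≤ ψ v)
    (hψ_eq_zero : ∀ v, ψ v = 0 ↔ v = 0)
    (hψ_add : ∀ v w, ψ (v + w) ≤ ψ v + ψ w)
    (hψ_smul : ∀ (c : ℝ) (v : Fin l → ℝ), ψ (c • v) = |c| * ψ v)
    (hψ_mono : ∀ v w : Fin l → ℝ, (∀ i, 0 ≤ v i) → (∀ i, v i ≤ w i) → ψ v ≤ ψ w)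
    (A : ∀ (i : Fin l) (j : Fin m), X j →ₗ[ℝ] Y i)
    (hA_pos : ∀ i j (x : X j), 0 ≤ x → 0 ≤ A i j x)
    (I : ∀ j : Fin m, X j → Z j)
    (hI_odd : ∀ j (x : X j), I j (-x) = -(I j x))
    (W : ∀ j : Fin m, Set (X j))
    (hW_symm : ∀ j, ∀ x ∈ W j, -x ∈ W j)
    (U : ∀ j : Fin m, Set (Z j))
    (hU_symm : ∀ j, ∀ u ∈ U j, -u ∈ U j)
    (L : ∀ j : Fin m, Z j → X j) (φ : ∀ j, X j)
    (hφW : ∀ j, φ j ∈ W j) (hφU : ∀ j, I j (φ j) ∈ U j)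
    (hL : ∀ x : ∀ j, X j, (∀ j, x j ∈ W j) → ∀ z : ∀ j, Z j,
      (∀ j, ∃ u ∈ U j, z j = I j (x j) + u) →
      ∀ j, -φ j ≤ x j - L j (z j) ∧ x j - L j (z j) ≤ φ j)
    (σ : Fin m → ℝ) (hσ : ∀ j, σ j = 1 ∨ σ j = -1) :
    let Aσ : (∀ j, X j) → ∀ i, Y i := fun x i => ∑ j, σ j • A i j (x j)
    let Φ₀ : (∀ j, Z j) → ∀ i, Y i := fun z i => ∑ j, σ j • A i j (L j (z j))
    let Err : ((∀ j, Z j) → ∀ i, Y i) → ℝ≥0∞ := fun Φ =>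
      ⨆ x : ∀ j, X j, ⨆ (_ : ∀ j, x j ∈ W j), ⨆ z : ∀ j, Z j,
        ⨆ (_ : ∀ j, ∃ u ∈ U j, z j = I j (x j) + u),
          ENNReal.ofReal (ψ fun i => ‖Aσ x i - Φ z i‖)
    (⨅ Φ : (∀ j, Z j) → ∀ i, Y i, Err Φ) = Err Φ₀ ∧
      Err Φ₀ = ENNReal.ofReal (ψ fun i => ‖∑ j, A i j (φ j)‖) := by
  intro Aσ Φ₀ Err
  set T : ℝ≥0∞ := ENNReal.ofReal (ψ fun i => ‖∑ j, A i j (φ j)‖) with hT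
  -- φ is nonnegative
  have feas1 : ∀ j, ∃ u ∈ U j, (0 : Z j) = I j (φ j) + u := fun j =>
    ⟨-I j (φ j), hU_symm j _ (hφU j), by simp⟩
  have feas2 : ∀ j, ∃ u ∈ U j, (0 : Z j) = I j ((fun j => -φ j) j) + u := fun j =>
    ⟨I j (φ j), hφU j, by simp [hI_odd]⟩
  have hφ_nonneg : ∀ j, 0 ≤ φ j := by
    intro j
    have h1 := (hL φ hφW (fun _ => 0) feas1 j).1
    have h2 := (hL (fun j => -φ j) (fun j => hW_symm j _ (hφW j)) (fun _ => 0) feas2 j).2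
    have hadd := add_le_add h1 h2
    have hsub : -(φ j + φ j) - L j 0 ≤ (φ j + φ j) - L j 0 := by
      refine le_trans (le_of_eq ?_) (le_trans hadd (le_of_eq ?_)) <;> abel
    have hsum : -(φ j + φ j) ≤ φ j + φ j := (sub_le_sub_iff_right _).mp hsub
    have h4 : (0 : X j) ≤ (4 : ℝ) • φ j := by
      have h := add_le_add_left hsum (φ j + φ j)
      rw [neg_add_cancel] at h
      rw [show (4 : ℝ) • φ j = (φ j + φ j) + (φ j + φ j) by module]
      exact h
    have := smul_nonneg (by norm_num : (0:ℝ) ≤ (4:ℝ)⁻¹) h4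
    rwa [smul_smul, inv_mul_cancel₀ (by norm_num : (4:ℝ) ≠ 0), one_smul] at this
  have hS_nonneg : ∀ i, (0 : Y i) ≤ ∑ j, A i j (φ j) :=
    fun i => Finset.sum_nonneg fun j _ => hA_pos i j _ (hφ_nonneg j)
  -- Upper bound: Err Φ₀ ≤ T
  have hub : Err Φ₀ ≤ T := by
    refine iSup_le fun x => iSup_le fun hx => iSup_le fun z => iSup_le fun hz => ?_
    apply ENNReal.ofReal_le_ofReal
    refine hψ_mono _ _ (fun i => norm_nonneg _) fun i => ?_
    have hd := hL x hx z hz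
    have hdiff : Aσ x i - Φ₀ z i = ∑ j, σ j • A i j (x j - L j (z j)) := by
      simp only [Aσ, Φ₀, ← Finset.sum_sub_distrib, map_sub, smul_sub]
    have hterm : ∀ j, σ j • A i j (x j - L j (z j)) ≤ A i j (φ j) ∧
        -A i j (φ j) ≤ σ j • A i j (x j - L j (z j)) := by
      intro j
      have hhi : A i j (x j - L j (z j)) ≤ A i j (φ j) := by
        have := hA_pos i j _ (sub_nonneg.mpr (hd j).2)
        rwa [map_sub, sub_nonneg] at this
      have hlo : -A i j (φ j) ≤ A i j (x j - L j (z j)) := by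
        have := hA_pos i j _ (sub_nonneg.mpr (hd j).1)
        rwa [map_sub, map_neg, sub_nonneg] at this
      rcases hσ j with h | h
      · simp only [h, one_smul]; exact ⟨hhi, hlo⟩
      · simp only [h, neg_smul, one_smul]
        exact ⟨neg_le.mpr hlo, neg_le_neg hhi⟩
    have hhi_sum : Aσ x i - Φ₀ z i ≤ ∑ j, A i j (φ j) := by
      rw [hdiff]; exact Finset.sum_le_sum fun j _ => (hterm j).1
    have hlo_sum : -(∑ j, A i j (φ j)) ≤ Aσ x i - Φ₀ z i := by
      rw [hdiff, ← Finset.sum_neg_distrib]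
      exact Finset.sum_le_sum fun j _ => (hterm j).2
    refine norm_le_norm_of_abs_le_abs ?_
    rw [abs_of_nonneg (hS_nonneg i)]
    exact abs_le'.mpr ⟨hhi_sum, neg_le.mp hlo_sum⟩
  -- Lower bound: T ≤ Err Φ for every Φ
  have hlb : ∀ Φ : (∀ j, Z j) → ∀ i, Y i, T ≤ Err Φ := by
    intro Φ
    set xx : ∀ j, X j := fun j => σ j • φ j with hxx
    have hxxW : ∀ j, xx j ∈ W j := by
      intro j; rcases hσ j with h | h
      · simpa [hxx, h] using hφW j
      · simpa [hxx, h] using hW_symm j _ (hφW j)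
    have hnxxW : ∀ j, (fun j => -xx j) j ∈ W j := fun j => hW_symm j _ (hxxW j)
    have hIU : ∀ j, I j (xx j) ∈ U j ∧ -I j (xx j) ∈ U j := by
      intro j; rcases hσ j with h | h
      · simp only [hxx, h, one_smul]
        exact ⟨hφU j, hU_symm j _ (hφU j)⟩
      · simp only [hxx, h, neg_smul, one_smul, hI_odd, neg_neg]
        exact ⟨hU_symm j _ (hφU j), hφU j⟩
    have feasx : ∀ j, ∃ u ∈ U j, (0 : Z j) = I j (xx j) + u := fun j =>
      ⟨-I j (xx j), (hIU j).2, by simp⟩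
    have feasnx : ∀ j, ∃ u ∈ U j, (0 : Z j) = I j ((fun j => -xx j) j) + u := fun j =>
      ⟨I j (xx j), (hIU j).1, by simp [hI_odd]⟩
    have hs : ∀ i, Aσ xx i = ∑ j, A i j (φ j) := by
      intro i
      refine Finset.sum_congr rfl fun j _ => ?_
      rw [hxx, map_smul, smul_smul]
      rcases hσ j with h | h <;> simp [h]
    have hns : ∀ i, Aσ (fun j => -xx j) i = -(∑ j, A i j (φ j)) := by
      intro i
      rw [← hs i]
      simp only [Aσ, map_neg, smul_neg, Finset.sum_neg_distrib]
    set a : Fin l → ℝ := fun i => ‖Aσ xx i - Φ (fun _ => 0) i‖ with ha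
    set b : Fin l → ℝ := fun i => ‖Aσ (fun j => -xx j) i - Φ (fun _ => 0) i‖ with hb
    have hErra : ENNReal.ofReal (ψ a) ≤ Err Φ :=
      le_iSup_of_le xx (le_iSup_of_le hxxW (le_iSup_of_le (fun _ => 0)
        (le_iSup_of_le feasx le_rfl)))
    have hErrb : ENNReal.ofReal (ψ b) ≤ Err Φ :=
      le_iSup_of_le (fun j => -xx j) (le_iSup_of_le hnxxW (le_iSup_of_le (fun _ => 0)
        (le_iSup_of_le feasnx le_rfl)))
    have hcomp : ∀ i, 2 * ‖∑ j, A i j (φ j)‖ ≤ a i + b i := by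
      intro i
      have key : (Aσ xx i - Φ (fun _ => 0) i) - (Aσ (fun j => -xx j) i - Φ (fun _ => 0) i)
          = (2 : ℝ) • (∑ j, A i j (φ j)) := by
        rw [hs i, hns i]; module
      calc 2 * ‖∑ j, A i j (φ j)‖ = ‖(2 : ℝ) • (∑ j, A i j (φ j))‖ := by
            rw [norm_smul]; simp
        _ = ‖(Aσ xx i - Φ (fun _ => 0) i) - (Aσ (fun j => -xx j) i - Φ (fun _ => 0) i)‖ := by
            rw [key]
        _ ≤ a i + b i := norm_sub_le _ _
    have hψ2 : 2 * ψ (fun i => ‖∑ j, A i j (φ j)‖) ≤ ψ a + ψ b := by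
      have e1 : ψ ((2 : ℝ) • fun i => ‖∑ j, A i j (φ j)‖)
          = 2 * ψ (fun i => ‖∑ j, A i j (φ j)‖) := by
        rw [hψ_smul]; norm_num
      have e2 : ψ ((2 : ℝ) • fun i => ‖∑ j, A i j (φ j)‖) ≤ ψ (a + b) := by
        refine hψ_mono _ _ (fun i => ?_) (fun i => ?_)
        · have := norm_nonneg (∑ j, A i j (φ j))
          simp only [Pi.smul_apply, smul_eq_mul]; linarith
        · simpa [Pi.smul_apply, smul_eq_mul] using hcomp i
      calc 2 * ψ (fun i => ‖∑ j, A i j (φ j)‖) ≤ ψ (a + b) := e1 ▸ e2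
        _ ≤ ψ a + ψ b := hψ_add a b
    rcases le_total (ψ a) (ψ b) with hle | hle
    · refine le_trans (ENNReal.ofReal_le_ofReal ?_) hErrb
      linarith
    · refine le_trans (ENNReal.ofReal_le_ofReal ?_) hErra
      linarith
  constructor
  · exact le_antisymm (iInf_le _ Φ₀) (le_iInf fun Φ => hub.trans (hlb Φ))
  · exact le_antisymm hub (hlb Φ₀)
end

section
/- Optimal recovery of a positive integral operator into L¹ on the class H^ω (Theorem on integral operators, L¹ case): Let (M',ρ) be a compact metric space equipped with a finite Borel measure μ, (N,ν) a σ-finite measure space, and K : N × M' → ℝ a nonnegative ν×μ-integrable kernel. Let A be the integral operator A x(y) := ∫_{M'} K(y,t) x(t) dμ(t), mapping bounded Borel functions on M' into L¹(N,ν). Let W := H^ω(M'), I_Q the evaluation information operator, and U_e the error set. Then the method Φ := A ∘ L_{ω,Q,e} is an optimal method of recovery of A on W based on information I_Q with U_e-error, and E(A; W; I_Q; U_e) = E(A; W; I_Q; U_e; Φ) = ∫_{M'} τ_{ω,Q,e}(t) ( ∫_N K(y,t) dν(y) ) dμ(t). -/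
open MeasureTheory
open scoped ENNReal

/-- The function `τ_{ω,Q,e}(t) = min_j (e_j + ω(ρ(t,q_j)))`. -/
noncomputable def tauOR {M : Type*} [MetricSpace M] (ω : ℝ → ℝ) {n : ℕ}
    (q : Fin n → M) (e : Fin n → ℝ) (t : M) : ℝ :=
  ⨅ j, (e j + ω (dist t (q j)))

/-- The method of recovery `L_{ω,Q,e}` built on the generalized Voronoi cells:
`L_{ω,Q,e} z` equals `z_j` on the cell `Π_j`. -/
noncomputable def LmethOR {M : Type*} [MetricSpace M] (ω : ℝ → ℝ) {n : ℕ}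
    (q : Fin n → M) (e : Fin n → ℝ) (z : Fin n → ℝ) (t : M) : ℝ :=
  haveI := Classical.dec
  if h : (Finset.univ.filter fun j => tauOR ω q e t = e j + ω (dist t (q j))).Nonempty
  then z ((Finset.univ.filter fun j => tauOR ω q e t = e j + ω (dist t (q j))).min' h)
  else 0

section Helpers

variable {M : Type*} [MetricSpace M] {ω : ℝ → ℝ} {n : ℕ} {q : Fin n → M} {e : Fin n → ℝ}

lemma tauOR_le (hn : 0 < n) (t : M) (j : Fin n) :
    tauOR ω q e t ≤ e j + ω (dist t (q j)) := by
  haveI : Nonempty (Fin n) := ⟨⟨0, hn⟩⟩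
  exact ciInf_le (Finite.bddBelow_range _) j

lemma tauOR_exists_eq (hn : 0 < n) (t : M) :
    ∃ j, tauOR ω q e t = e j + ω (dist t (q j)) := by
  haveI : Nonempty (Fin n) := ⟨⟨0, hn⟩⟩
  obtain ⟨j, hj⟩ := exists_eq_ciInf_of_finite (f := fun j => e j + ω (dist t (q j)))
  exact ⟨j, hj.symm⟩

lemma tauOR_nonneg (hn : 0 < n) (he : ∀ j, 0 ≤ e j)
    (hω_nonneg : ∀ s : ℝ, 0 ≤ s → 0 ≤ ω s) (t : M) : 0 ≤ tauOR ω q e t := by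
  haveI : Nonempty (Fin n) := ⟨⟨0, hn⟩⟩
  exact le_ciInf fun j => add_nonneg (he j) (hω_nonneg _ dist_nonneg)

lemma tauOR_sub_le (hn : 0 < n)
    (hω_mono : MonotoneOn ω (Set.Ici 0))
    (hω_subadd : ∀ s t : ℝ, 0 ≤ s → 0 ≤ t → ω (s + t) ≤ ω s + ω t)
    (t t' : M) : tauOR ω q e t ≤ tauOR ω q e t' + ω (dist t t') := by
  haveI : Nonempty (Fin n) := ⟨⟨0, hn⟩⟩
  have h : ∀ j, tauOR ω q e t - ω (dist t t') ≤ e j + ω (dist t' (q j)) := by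
    intro j
    have h1 : ω (dist t (q j)) ≤ ω (dist t t') + ω (dist t' (q j)) := by
      have h2 : ω (dist t (q j)) ≤ ω (dist t t' + dist t' (q j)) :=
        hω_mono dist_nonneg (Set.mem_Ici.mpr (add_nonneg dist_nonneg dist_nonneg))
          (dist_triangle t t' (q j))
      exact h2.trans (hω_subadd _ _ dist_nonneg dist_nonneg)
    have := tauOR_le (q := q) (e := e) (ω := ω) hn t j
    linarith
  have := le_ciInf h
  rw [← tauOR] at this
  linarith

lemma tauOR_abs_sub_le (hn : 0 < n)
    (hω_mono : MonotoneOn ω (Set.Ici 0))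
    (hω_subadd : ∀ s t : ℝ, 0 ≤ s → 0 ≤ t → ω (s + t) ≤ ω s + ω t)
    (t t' : M) : |tauOR ω q e t - tauOR ω q e t'| ≤ ω (dist t t') := by
  rw [abs_sub_le_iff]
  constructor
  · have := tauOR_sub_le (q := q) (e := e) hn hω_mono hω_subadd t t'
    linarith
  · have := tauOR_sub_le (q := q) (e := e) hn hω_mono hω_subadd t' t
    rw [dist_comm t' t] at this
    linarith

lemma tauOR_continuous (hn : 0 < n) (hω0 : ω 0 = 0)
    (hω_cont : ContinuousOn ω (Set.Ici 0))
    (hω_mono : MonotoneOn ω (Set.Ici 0))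
    (hω_subadd : ∀ s t : ℝ, 0 ≤ s → 0 ≤ t → ω (s + t) ≤ ω s + ω t)
    (hω_nonneg : ∀ s : ℝ, 0 ≤ s → 0 ≤ ω s) :
    Continuous (tauOR ω q e) := by
  rw [Metric.continuous_iff]
  intro t ε hε
  have h0 : ContinuousWithinAt ω (Set.Ici 0) 0 := hω_cont 0 (Set.mem_Ici.mpr (le_refl 0))
  rw [Metric.continuousWithinAt_iff] at h0
  obtain ⟨δ, hδ, hδ'⟩ := h0 ε hε
  refine ⟨δ, hδ, fun t' ht' => ?_⟩
  have hb : ω (dist t' t) < ε := by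
    have h1 := hδ' (x := dist t' t) (Set.mem_Ici.mpr dist_nonneg)
      (by rwa [Real.dist_eq, sub_zero, abs_of_nonneg dist_nonneg])
    rw [hω0, Real.dist_eq, sub_zero, abs_of_nonneg (hω_nonneg _ dist_nonneg)] at h1
    exact h1
  have := tauOR_abs_sub_le (q := q) (e := e) hn hω_mono hω_subadd t' t
  rw [Real.dist_eq]
  linarith [abs_le.mp this]

lemma tauOR_at_q (hn : 0 < n) (hω0 : ω 0 = 0) (j : Fin n) :
    tauOR ω q e (q j) ≤ e j := by
  have := tauOR_le (q := q) (e := e) (ω := ω) hn (q j) j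
  rwa [dist_self, hω0, add_zero] at this

lemma LmethOR_eq (hn : 0 < n) (z : Fin n → ℝ) (t : M) :
    ∃ j, LmethOR ω q e z t = z j ∧ tauOR ω q e t = e j + ω (dist t (q j)) := by
  classical
  obtain ⟨j0, hj0⟩ := tauOR_exists_eq (q := q) (e := e) (ω := ω) hn t
  have hne : (Finset.univ.filter fun j => tauOR ω q e t = e j + ω (dist t (q j))).Nonempty :=
    ⟨j0, by simp [hj0]⟩
  refine ⟨(Finset.univ.filter fun j => tauOR ω q e t = e j + ω (dist t (q j))).min' hne, ?_, ?_⟩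
  · simp only [LmethOR]
    rw [dif_pos hne]
  · have := Finset.min'_mem _ hne
    simpa using this

end Helpers

section Helpers2

variable {M : Type*} [MetricSpace M] {ω : ℝ → ℝ} {n : ℕ} {q : Fin n → M} {e : Fin n → ℝ}

lemma abs_sub_LmethOR_le (hn : 0 < n) {x : M → ℝ}
    (hx : ∀ t t' : M, |x t - x t'| ≤ ω (dist t t'))
    {z : Fin n → ℝ} (hz : ∀ j, |z j - x (q j)| ≤ e j) (t : M) :
    |x t - LmethOR ω q e z t| ≤ tauOR ω q e t := by
  obtain ⟨j, hL, hτ⟩ := LmethOR_eq (q := q) (e := e) (ω := ω) hn z t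
  rw [hL, hτ]
  calc |x t - z j| ≤ |x t - x (q j)| + |x (q j) - z j| := abs_sub_le _ _ _
    _ ≤ ω (dist t (q j)) + e j := by
        refine add_le_add (hx _ _) ?_
        rw [abs_sub_comm]; exact hz j
    _ = e j + ω (dist t (q j)) := add_comm _ _

lemma abs_LmethOR_le (hn : 0 < n) (z : Fin n → ℝ) (t : M) :
    |LmethOR ω q e z t| ≤ ∑ j, |z j| := by
  obtain ⟨j, hL, -⟩ := LmethOR_eq (q := q) (e := e) (ω := ω) hn z t
  rw [hL]
  exact Finset.single_le_sum (f := fun j => |z j|) (fun i _ => abs_nonneg _)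
    (Finset.mem_univ j)

lemma LmethOR_measurable [MeasurableSpace M] [BorelSpace M]
    (hn : 0 < n) (hω0 : ω 0 = 0)
    (hω_cont : ContinuousOn ω (Set.Ici 0))
    (hω_mono : MonotoneOn ω (Set.Ici 0))
    (hω_subadd : ∀ s t : ℝ, 0 ≤ s → 0 ≤ t → ω (s + t) ≤ ω s + ω t)
    (hω_nonneg : ∀ s : ℝ, 0 ≤ s → 0 ≤ ω s) (z : Fin n → ℝ) :
    Measurable (LmethOR ω q e z) := by
  classical
  haveI : Nonempty (Fin n) := ⟨⟨0, hn⟩⟩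
  have hτ : Continuous (tauOR ω q e) :=
    tauOR_continuous (q := q) (e := e) hn hω0 hω_cont hω_mono hω_subadd hω_nonneg
  have hA : ∀ j : Fin n, MeasurableSet {t : M | tauOR ω q e t = e j + ω (dist t (q j))} := by
    intro j
    have hc : Continuous fun t : M => e j + ω (dist t (q j)) := by
      refine continuous_const.add ?_
      exact hω_cont.comp_continuous (continuous_id.dist continuous_const) fun t =>
        Set.mem_Ici.mpr dist_nonneg
    exact measurableSet_eq_fun hτ.measurable hc.measurable
  set S : M → Finset (Fin n) :=
    fun t => Finset.univ.filter fun j => tauOR ω q e t = e j + ω (dist t (q j)) with hS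
  have hne : ∀ t, (S t).Nonempty := by
    intro t
    obtain ⟨j, hj⟩ := tauOR_exists_eq (q := q) (e := e) (ω := ω) hn t
    exact ⟨j, by simp [hS, hj]⟩
  have hLm : LmethOR ω q e z = fun t => z ((S t).min' (hne t)) := by
    funext t
    simp only [LmethOR, hS]
    rw [dif_pos (hne t)]
  rw [hLm]
  have hsel : Measurable fun t => (S t).min' (hne t) := by
    apply measurable_to_countable'
    intro j
    have hpre : (fun t => (S t).min' (hne t)) ⁻¹' {j} =
        {t | tauOR ω q e t = e j + ω (dist t (q j))} ∩
          ⋂ (i : Fin n), ⋂ (_ : i < j), {t | tauOR ω q e t = e i + ω (dist t (q i))}ᶜ := by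
      ext t
      simp only [Set.mem_preimage, Set.mem_singleton_iff, Set.mem_inter_iff, Set.mem_iInter,
        Set.mem_compl_iff, Set.mem_setOf_eq]
      constructor
      · rintro rfl
        refine ⟨by simpa [hS] using Finset.min'_mem (S t) (hne t), ?_⟩
        intro i hi hcon
        have hle : (S t).min' (hne t) ≤ i := Finset.min'_le _ _ (by simp [hS, hcon])
        exact absurd hle (not_le.mpr hi)
      · rintro ⟨h1, h2⟩
        have h3 : (S t).min' (hne t) ≤ j := Finset.min'_le _ _ (by simp [hS, h1])
        have h4 : ¬ (S t).min' (hne t) < j := fun hlt =>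
          h2 _ hlt (by simpa [hS] using Finset.min'_mem (S t) (hne t))
        exact le_antisymm h3 (not_lt.mp h4)
    rw [hpre]
    exact (hA j).inter (MeasurableSet.iInter fun i => MeasurableSet.iInter fun _ => (hA i).compl)
  exact (measurable_from_top (f := z)).comp hsel

end Helpers2

set_option maxHeartbeats 1000000 in
/-- Optimal recovery of a positive integral operator into `L¹` on the class `H^ω`
(Theorem 2 of the paper, `L¹` case). -/
theorem optimal_recovery_integral_operator_L1
    {M : Type*} [MetricSpace M] [CompactSpace M] [MeasurableSpace M] [BorelSpace M]
    (μ : Measure M) [IsFiniteMeasure μ]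
    {N : Type*} [MeasurableSpace N] (ν : Measure N) [SigmaFinite ν]
    (K : N → M → ℝ) (hK_nonneg : ∀ y t, 0 ≤ K y t)
    (hK_int : Integrable (fun p : N × M => K p.1 p.2) (ν.prod μ))
    (ω : ℝ → ℝ) (hω0 : ω 0 = 0)
    (hω_cont : ContinuousOn ω (Set.Ici 0))
    (hω_mono : MonotoneOn ω (Set.Ici 0))
    (hω_subadd : ∀ s t : ℝ, 0 ≤ s → 0 ≤ t → ω (s + t) ≤ ω s + ω t)
    (hω_nonneg : ∀ s : ℝ, 0 ≤ s → 0 ≤ ω s)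
    {n : ℕ} (hn : 0 < n) (q : Fin n → M) (e : Fin n → ℝ) (he : ∀ j, 0 ≤ e j) :
    -- the integral operator, the class `H^ω`, the error of a method, and the optimal method
    let A : (M → ℝ) → N → ℝ := fun x y => ∫ t, K y t * x t ∂μ
    let W : Set (M → ℝ) := {x | Measurable x ∧ ∀ t t' : M, |x t - x t'| ≤ ω (dist t t')}
    let Err : ((Fin n → ℝ) → N → ℝ) → ℝ≥0∞ := fun Φ =>
      ⨆ x ∈ W, ⨆ z : Fin n → ℝ, ⨆ (_ : ∀ j, |z j - x (q j)| ≤ e j),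
        eLpNorm (fun y => A x y - Φ z y) 1 ν
    let Φ₀ : (Fin n → ℝ) → N → ℝ := fun z => A (LmethOR ω q e z)
    (⨅ Φ : {Φ : (Fin n → ℝ) → N → ℝ // ∀ z, MemLp (Φ z) 1 ν}, Err Φ.1) = Err Φ₀ ∧
      Err Φ₀ = ∫⁻ t, ENNReal.ofReal (tauOR ω q e t) * (∫⁻ y, ENNReal.ofReal (K y t) ∂ν) ∂μ := by
  intro A W Err Φ₀
  classical
  haveI : Nonempty (Fin n) := ⟨⟨0, hn⟩⟩
  have hA : ∀ x y, A x y = ∫ t, K y t * x t ∂μ := fun _ _ => rfl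
  have hErr : ∀ Φ, Err Φ = ⨆ x ∈ W, ⨆ z : Fin n → ℝ, ⨆ (_ : ∀ j, |z j - x (q j)| ≤ e j),
      eLpNorm (fun y => A x y - Φ z y) 1 ν := fun _ => rfl
  set τ : M → ℝ := tauOR ω q e with hτdef
  set R : ℝ≥0∞ := ∫⁻ t, ENNReal.ofReal (τ t) * (∫⁻ y, ENNReal.ofReal (K y t) ∂ν) ∂μ with hR
  have hτ_cont : Continuous τ := tauOR_continuous hn hω0 hω_cont hω_mono hω_subadd hω_nonneg
  have hτ_meas : Measurable τ := hτ_cont.measurable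
  have hτ_nonneg : ∀ t, 0 ≤ τ t := tauOR_nonneg hn he hω_nonneg
  have hτ_mod : ∀ t t' : M, |τ t - τ t'| ≤ ω (dist t t') := tauOR_abs_sub_le hn hω_mono hω_subadd
  obtain ⟨C, hC⟩ : ∃ C, ∀ t t' : M, dist t t' ≤ C := by
    obtain ⟨C, hC⟩ := Metric.isBounded_iff.mp (isCompact_univ (X := M)).isBounded
    exact ⟨C, fun t t' => hC (Set.mem_univ t) (Set.mem_univ t')⟩
  have hωC : ∀ t t' : M, ω (dist t t') ≤ ω C := fun t t' =>
    hω_mono (Set.mem_Ici.mpr dist_nonneg)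
      (Set.mem_Ici.mpr (dist_nonneg.trans (hC t t'))) (hC t t')
  have hτ_bdd : ∀ t, |τ t| ≤ e ⟨0, hn⟩ + ω C := by
    intro t
    rw [abs_of_nonneg (hτ_nonneg t)]
    exact (tauOR_le hn t ⟨0, hn⟩).trans (add_le_add_right (hωC t _) _)
  have prodInt : ∀ x : M → ℝ, Measurable x → (∃ B, ∀ t, |x t| ≤ B) →
      Integrable (fun p : N × M => K p.1 p.2 * x p.2) (ν.prod μ) := by
    rintro x hx ⟨B, hB⟩
    have h := hK_int.bdd_mul ((hx.comp measurable_snd).aestronglyMeasurable)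
      (c := B) (Filter.Eventually.of_forall fun p => by simpa [Real.norm_eq_abs] using hB p.2)
    exact h.congr (Filter.Eventually.of_forall fun p => mul_comm _ _)
  have hKτ_int : Integrable (fun p : N × M => K p.1 p.2 * τ p.2) (ν.prod μ) :=
    prodInt τ hτ_meas ⟨_, hτ_bdd⟩
  have eLp_eq : ∀ g : N → ℝ, eLpNorm g 1 ν = ∫⁻ y, ENNReal.ofReal |g y| ∂ν := by
    intro g
    rw [eLpNorm_one_eq_lintegral_enorm]
    refine lintegral_congr fun y => ?_
    rw [← ofReal_norm_eq_enorm, Real.norm_eq_abs]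
  have swap : ∫⁻ y, ∫⁻ t, ENNReal.ofReal (K y t * τ t) ∂μ ∂ν = R := by
    have hmeas : AEMeasurable
        (Function.uncurry fun y t => ENNReal.ofReal (K y t * τ t)) (ν.prod μ) :=
      ENNReal.measurable_ofReal.comp_aemeasurable hKτ_int.aestronglyMeasurable.aemeasurable
    rw [lintegral_lintegral_swap hmeas, hR]
    refine lintegral_congr fun t => ?_
    rw [← lintegral_const_mul' _ _ ENNReal.ofReal_ne_top]
    refine lintegral_congr fun y => ?_
    rw [← ENNReal.ofReal_mul (hτ_nonneg t), mul_comm (τ t)]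
  -- Step A : upper bound for the method Φ₀
  have stepA : ∀ x ∈ W, ∀ z : Fin n → ℝ, (∀ j, |z j - x (q j)| ≤ e j) →
      eLpNorm (fun y => A x y - Φ₀ z y) 1 ν ≤ R := by
    intro x hx z hz
    obtain ⟨hx_meas, hx_mod⟩ := hx
    have hx_bdd : ∀ t, |x t| ≤ |x (q ⟨0, hn⟩)| + ω C := by
      intro t
      have h1 := hx_mod t (q ⟨0, hn⟩)
      have h2 := hωC t (q ⟨0, hn⟩)
      have h3 : |x t| ≤ |x t - x (q ⟨0, hn⟩)| + |x (q ⟨0, hn⟩)| := by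
        have := abs_add_le (x t - x (q ⟨0, hn⟩)) (x (q ⟨0, hn⟩))
        simpa using this
      linarith
    have hL_meas : Measurable (LmethOR ω q e z) :=
      LmethOR_measurable hn hω0 hω_cont hω_mono hω_subadd hω_nonneg z
    have hKx := prodInt x hx_meas ⟨_, hx_bdd⟩
    have hKL := prodInt (LmethOR ω q e z) hL_meas ⟨_, abs_LmethOR_le hn z⟩
    rw [eLp_eq]
    have hpt : ∀ᵐ y ∂ν, ENNReal.ofReal |A x y - Φ₀ z y| ≤
        ∫⁻ t, ENNReal.ofReal (K y t * τ t) ∂μ := by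
      filter_upwards [hKx.prod_right_ae, hKL.prod_right_ae, hKτ_int.prod_right_ae]
        with y h1 h2 h3
      have hsub : A x y - Φ₀ z y = ∫ t, K y t * (x t - LmethOR ω q e z t) ∂μ := by
        show (∫ t, K y t * x t ∂μ) - (∫ t, K y t * LmethOR ω q e z t ∂μ) = _
        rw [← integral_sub h1 h2]
        refine integral_congr_ae (Filter.Eventually.of_forall fun t => ?_)
        ring
      rw [hsub]
      have hsub2 : Integrable (fun t => K y t * (x t - LmethOR ω q e z t)) μ :=
        (h1.sub h2).congr (Filter.Eventually.of_forall fun t => by simp only [Pi.sub_apply]; ring)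
      have habs : |∫ t, K y t * (x t - LmethOR ω q e z t) ∂μ| ≤ ∫ t, K y t * τ t ∂μ := by
        have hn1 := norm_integral_le_integral_norm (μ := μ)
          (fun t => K y t * (x t - LmethOR ω q e z t))
        simp only [Real.norm_eq_abs] at hn1
        refine hn1.trans (integral_mono hsub2.abs h3 fun t => ?_)
        rw [abs_mul, abs_of_nonneg (hK_nonneg y t)]
        exact mul_le_mul_of_nonneg_left (abs_sub_LmethOR_le hn hx_mod hz t) (hK_nonneg y t)
      calc ENNReal.ofReal |∫ t, K y t * (x t - LmethOR ω q e z t) ∂μ|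
          ≤ ENNReal.ofReal (∫ t, K y t * τ t ∂μ) := ENNReal.ofReal_le_ofReal habs
        _ = ∫⁻ t, ENNReal.ofReal (K y t * τ t) ∂μ :=
            ofReal_integral_eq_lintegral_ofReal h3
              (Filter.Eventually.of_forall fun t => mul_nonneg (hK_nonneg y t) (hτ_nonneg t))
    calc ∫⁻ y, ENNReal.ofReal |A x y - Φ₀ z y| ∂ν
        ≤ ∫⁻ y, ∫⁻ t, ENNReal.ofReal (K y t * τ t) ∂μ ∂ν := lintegral_mono_ae hpt
      _ = R := swap
  have hErrΦ₀_le : Err Φ₀ ≤ R := by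
    rw [hErr]
    exact iSup₂_le fun x hx => iSup_le fun z => iSup_le fun hz => stepA x hx z hz
  have hΦ₀mem : ∀ z, MemLp (Φ₀ z) 1 ν := by
    intro z
    rw [memLp_one_iff_integrable]
    have hL_meas : Measurable (LmethOR ω q e z) :=
      LmethOR_measurable hn hω0 hω_cont hω_mono hω_subadd hω_nonneg z
    exact (prodInt _ hL_meas ⟨_, abs_LmethOR_le hn z⟩).integral_prod_left
  -- facts about A τ
  have hAτ_int : Integrable (fun y => A τ y) ν := hKτ_int.integral_prod_left
  have hAτ_nonneg : ∀ y, 0 ≤ A τ y := fun y =>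
    integral_nonneg fun t => mul_nonneg (hK_nonneg y t) (hτ_nonneg t)
  have hAτ_norm : eLpNorm (fun y => A τ y) 1 ν = R := by
    rw [eLp_eq, ← swap]
    refine lintegral_congr_ae ?_
    filter_upwards [hKτ_int.prod_right_ae] with y h3
    rw [abs_of_nonneg (hAτ_nonneg y)]
    exact ofReal_integral_eq_lintegral_ofReal h3
      (Filter.Eventually.of_forall fun t => mul_nonneg (hK_nonneg y t) (hτ_nonneg t))
  have hτW : τ ∈ W := ⟨hτ_meas, hτ_mod⟩
  have hnegτW : (fun t => -τ t) ∈ W := by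
    refine ⟨hτ_meas.neg, fun t t' => ?_⟩
    have := hτ_mod t t'
    rw [show -τ t - -τ t' = -(τ t - τ t') by ring, abs_neg]
    exact this
  have hz0 : ∀ j, |(0 : Fin n → ℝ) j - τ (q j)| ≤ e j := by
    intro j
    simp only [Pi.zero_apply, zero_sub, abs_neg]
    rw [abs_of_nonneg (hτ_nonneg _)]
    exact tauOR_at_q hn hω0 j
  have hz0' : ∀ j, |(0 : Fin n → ℝ) j - (fun t => -τ t) (q j)| ≤ e j := by
    intro j
    simp only [Pi.zero_apply, zero_sub, neg_neg]
    rw [abs_of_nonneg (hτ_nonneg _)]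
    exact tauOR_at_q hn hω0 j
  have hAnegτ_int : Integrable (fun y => A (fun t => -τ t) y) ν :=
    (prodInt _ hτ_meas.neg ⟨e ⟨0, hn⟩ + ω C, fun t => by simpa using hτ_bdd t⟩).integral_prod_left
  have hAneg : ∀ y, A (fun t => -τ t) y = -A τ y := by
    intro y
    show (∫ t, K y t * -τ t ∂μ) = -∫ t, K y t * τ t ∂μ
    rw [← integral_neg]
    refine integral_congr_ae (Filter.Eventually.of_forall fun t => ?_)
    ring
  -- Step B : lower bound for any admissible method
  have stepB : ∀ Φ : (Fin n → ℝ) → N → ℝ, (∀ z, MemLp (Φ z) 1 ν) → R ≤ Err Φ := by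
    intro Φ hΦ
    have hΦ0 : AEStronglyMeasurable (Φ 0) ν := (hΦ 0).1
    have h1 : eLpNorm (fun y => A τ y - Φ 0 y) 1 ν ≤ Err Φ := by
      rw [hErr]
      exact le_iSup₂_of_le τ hτW (le_iSup₂_of_le 0 hz0 le_rfl)
    have h2 : eLpNorm (fun y => A (fun t => -τ t) y - Φ 0 y) 1 ν ≤ Err Φ := by
      rw [hErr]
      exact le_iSup₂_of_le (fun t => -τ t) hnegτW (le_iSup₂_of_le 0 hz0' le_rfl)
    have hfm : AEStronglyMeasurable (fun y => A τ y - Φ 0 y) ν := hAτ_int.1.sub hΦ0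
    have hgm : AEStronglyMeasurable (fun y => A (fun t => -τ t) y - Φ 0 y) ν :=
      hAnegτ_int.1.sub hΦ0
    have key : (2 : ℝ≥0∞) * R ≤ eLpNorm (fun y => A τ y - Φ 0 y) 1 ν +
        eLpNorm (fun y => A (fun t => -τ t) y - Φ 0 y) 1 ν := by
      have htri := eLpNorm_sub_le hfm hgm le_rfl
      have hEq : (fun y => A τ y - Φ 0 y) - (fun y => A (fun t => -τ t) y - Φ 0 y)
          = fun y => (2 : ℝ) • A τ y := by
        funext y
        simp only [Pi.sub_apply, smul_eq_mul, hAneg y]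
        ring
      rw [hEq] at htri
      refine le_trans ?_ htri
      rw [show (fun y => (2 : ℝ) • A τ y) = (2 : ℝ) • fun y => A τ y from rfl,
        eLpNorm_const_smul, hAτ_norm]
      rw [show ‖(2:ℝ)‖ₑ = (2 : ℝ≥0∞) by rw [Real.enorm_eq_ofReal (by norm_num)]; norm_num]
    have h2R : (2 : ℝ≥0∞) * R ≤ 2 * Err Φ := by
      refine key.trans ?_
      rw [two_mul]
      exact add_le_add h1 h2
    exact (ENNReal.mul_le_mul_iff_right (by norm_num) (by norm_num)).mp h2R
  have hErrΦ₀_eq : Err Φ₀ = R := le_antisymm hErrΦ₀_le (stepB Φ₀ hΦ₀mem)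
  constructor
  · apply le_antisymm
    · exact iInf_le (fun Φ : {Φ : (Fin n → ℝ) → N → ℝ // ∀ z, MemLp (Φ z) 1 ν} => Err Φ.1)
        ⟨Φ₀, hΦ₀mem⟩
    · refine le_iInf fun Φ => ?_
      calc Err Φ₀ = R := hErrΦ₀_eq
        _ ≤ Err Φ.1 := stepB Φ.1 Φ.2
  · exact hErrΦ₀_eq
end

section
/- Constant-mass kernel case: Under the setting of optimal recovery of the positive integral operator A x(y) = ∫_{M'} K(y,t) x(t) dμ(t) into L¹(N,ν) on the class H^ω(M') based on information I_Q with U_e-error, if there is a constant C_K such that ∫_N K(y,t) dν(y) = C_K for μ-almost every t ∈ M', then E(A; H^ω(M'); I_Q; U_e) = C_K ∫_{M'} τ_{ω,Q,e}(t) dμ(t). -/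
open MeasureTheory
open scoped ENNReal

/-- Constant-mass kernel case: if `∫_N K(y,t) dν(y) = C_K` for `μ`-a.e. `t`, then the
error of optimal recovery of the integral operator equals `C_K ∫_{M'} τ_{ω,Q,e} dμ`
(Corollary 1 of the paper). -/
theorem optimal_recovery_integral_operator_constant_mass
    {M : Type*} [MetricSpace M] [CompactSpace M] [MeasurableSpace M] [BorelSpace M]
    (μ : Measure M) [IsFiniteMeasure μ]
    {N : Type*} [MeasurableSpace N] (ν : Measure N) [SigmaFinite ν]
    (K : N → M → ℝ) (hK_nonneg : ∀ y t, 0 ≤ K y t)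
    (hK_int : Integrable (fun p : N × M => K p.1 p.2) (ν.prod μ))
    (ω : ℝ → ℝ) (hω0 : ω 0 = 0)
    (hω_cont : ContinuousOn ω (Set.Ici 0))
    (hω_mono : MonotoneOn ω (Set.Ici 0))
    (hω_subadd : ∀ s t : ℝ, 0 ≤ s → 0 ≤ t → ω (s + t) ≤ ω s + ω t)
    (hω_nonneg : ∀ s : ℝ, 0 ≤ s → 0 ≤ ω s)
    {n : ℕ} (hn : 0 < n) (q : Fin n → M) (e : Fin n → ℝ) (he : ∀ j, 0 ≤ e j)
    (CK : ℝ) (hCK : ∀ᵐ t ∂μ, (∫ y, K y t ∂ν) = CK) :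
    let A : (M → ℝ) → N → ℝ := fun x y => ∫ t, K y t * x t ∂μ
    let W : Set (M → ℝ) := {x | Measurable x ∧ ∀ t t' : M, |x t - x t'| ≤ ω (dist t t')}
    let Err : ((Fin n → ℝ) → N → ℝ) → ℝ≥0∞ := fun Φ =>
      ⨆ x ∈ W, ⨆ z : Fin n → ℝ, ⨆ (_ : ∀ j, |z j - x (q j)| ≤ e j),
        eLpNorm (fun y => A x y - Φ z y) 1 ν
    (⨅ Φ : {Φ : (Fin n → ℝ) → N → ℝ // ∀ z, MemLp (Φ z) 1 ν}, Err Φ.1) =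
      ENNReal.ofReal (CK * ∫ t, tauOR ω q e t ∂μ) := by
  intro A W Err
  haveI : Nonempty (Fin n) := ⟨⟨0, hn⟩⟩
  -- the family of tau-like functions
  set F : (Fin n → ℝ) → M → ℝ := fun c t => ⨅ j, (c j + ω (dist t (q j))) with hFdef
  have hbdd : ∀ (c : Fin n → ℝ) (t : M),
      BddBelow (Set.range fun j => c j + ω (dist t (q j))) :=
    fun c t => (Set.finite_range _).bddBelow
  have hF_le : ∀ (c : Fin n → ℝ) (t : M) (j : Fin n), F c t ≤ c j + ω (dist t (q j)) :=
    fun c t j => ciInf_le (hbdd c t) j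
  have hle_F : ∀ (c : Fin n → ℝ) (t : M) (a : ℝ),
      (∀ j, a ≤ c j + ω (dist t (q j))) → a ≤ F c t :=
    fun c t a h => le_ciInf h
  -- modulus of continuity of F c
  have hF_mod : ∀ (c : Fin n → ℝ) (t t' : M), F c t - F c t' ≤ ω (dist t t') := by
    intro c t t'
    have hkey : F c t - ω (dist t t') ≤ F c t' := by
      refine hle_F c t' _ fun j => ?_
      have h0 := hF_le c t j
      have h1 : dist t (q j) ≤ dist t t' + dist t' (q j) := dist_triangle _ _ _
      have h2 : ω (dist t (q j)) ≤ ω (dist t t' + dist t' (q j)) :=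
        hω_mono dist_nonneg (add_nonneg dist_nonneg dist_nonneg) h1
      have h3 := hω_subadd (dist t t') (dist t' (q j)) dist_nonneg dist_nonneg
      linarith
    linarith
  have hF_abs : ∀ (c : Fin n → ℝ) (t t' : M), |F c t - F c t'| ≤ ω (dist t t') := by
    intro c t t'
    rw [abs_sub_le_iff]
    exact ⟨hF_mod c t t', by rw [dist_comm]; exact hF_mod c t' t⟩
  -- continuity from the modulus
  have cont_of_mod : ∀ f : M → ℝ, (∀ t t' : M, |f t - f t'| ≤ ω (dist t t')) →
      Continuous f := by
    intro f hf
    rw [Metric.continuous_iff]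
    intro t ε hε
    have h0 : ContinuousWithinAt ω (Set.Ici 0) 0 := hω_cont 0 Set.self_mem_Ici
    rw [ContinuousWithinAt, Metric.tendsto_nhdsWithin_nhds] at h0
    obtain ⟨δ, hδ, h⟩ := h0 ε hε
    refine ⟨δ, hδ, fun {t'} ht' => ?_⟩
    have h1 : dist (f t') (f t) ≤ ω (dist t' t) := by
      rw [Real.dist_eq]; exact hf t' t
    have h2 : ω (dist t' t) < ε := by
      have := h (x := dist t' t) dist_nonneg (by
        rw [Real.dist_eq, sub_zero, abs_of_nonneg dist_nonneg]
        exact lt_of_eq_of_lt (dist_comm t' t ▸ rfl) ht')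
      rw [Real.dist_eq, hω0, sub_zero] at this
      exact (le_abs_self _).trans_lt this
    exact h1.trans_lt h2
  have hF_cont : ∀ c : Fin n → ℝ, Continuous (F c) := fun c => cont_of_mod _ (hF_abs c)
  -- tau facts
  have hτ_eq : ∀ t, tauOR ω q e t = F e t := fun t => rfl
  have hτ_nonneg : ∀ t, 0 ≤ F e t :=
    fun t => hle_F e t 0 fun j => add_nonneg (he j) (hω_nonneg _ dist_nonneg)
  have hτq : ∀ j, F e (q j) ≤ e j := by
    intro j
    have := hF_le e (q j) j
    simpa [dist_self, hω0] using this
  -- boundedness of continuous functions on compact M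
  have bound_of_cont : ∀ f : M → ℝ, Continuous f → ∃ B : ℝ, ∀ t, |f t| ≤ B := by
    intro f hf
    obtain ⟨B, hB⟩ := (isCompact_range hf.norm).bddAbove
    exact ⟨B, fun t => hB ⟨t, rfl⟩⟩
  -- product integrability of K * (bounded continuous f)
  have hprod : ∀ f : M → ℝ, Continuous f →
      Integrable (fun p : N × M => K p.1 p.2 * f p.2) (ν.prod μ) := by
    intro f hf
    obtain ⟨B, hB⟩ := bound_of_cont f hf
    have hm : AEStronglyMeasurable (fun p : N × M => f p.2) (ν.prod μ) :=
      (hf.measurable.comp measurable_snd).aestronglyMeasurable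
    have := hK_int.bdd_mul (c := B) hm (Filter.Eventually.of_forall fun p => hB p.2)
    exact this.congr (Filter.Eventually.of_forall fun p => mul_comm _ _)
  -- the function g y = ∫ K y t * τ t dμ
  set g : N → ℝ := fun y => ∫ t, K y t * F e t ∂μ with hgdef
  have hg_int : Integrable g ν := (hprod (F e) (hF_cont e)).integral_prod_left
  have hg_nonneg : ∀ y, 0 ≤ g y :=
    fun y => integral_nonneg fun t => mul_nonneg (hK_nonneg y t) (hτ_nonneg t)
  have hg_val : ∫ y, g y ∂ν = CK * ∫ t, F e t ∂μ := by
    have hswap : ∫ y, ∫ t, K y t * F e t ∂μ ∂ν = ∫ t, ∫ y, K y t * F e t ∂ν ∂μ :=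
      integral_integral_swap (f := fun y t => K y t * F e t) (hprod (F e) (hF_cont e))
    rw [hgdef]
    rw [hswap]
    have hae : ∀ᵐ t ∂μ, (∫ y, K y t * F e t ∂ν) = CK * F e t := by
      filter_upwards [hCK] with t ht
      rw [integral_mul_const, ht, mul_comm]
    rw [integral_congr_ae hae, integral_const_mul]
  -- eLpNorm of A τ
  have heLpAτ : eLpNorm (fun y => A (F e) y) 1 ν = ENNReal.ofReal (CK * ∫ t, F e t ∂μ) := by
    rw [eLpNorm_one_eq_lintegral_enorm]
    have : ∀ y, ((‖A (F e) y‖ₑ : ℝ≥0∞)) = ENNReal.ofReal (g y) := by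
      intro y
      exact Real.enorm_eq_ofReal (hg_nonneg y)
    rw [lintegral_congr this, ← ofReal_integral_eq_lintegral_ofReal hg_int
      (Filter.Eventually.of_forall hg_nonneg), hg_val]
  -- key upper estimate on single errors
  have key : ∀ x x' : M → ℝ, Continuous x → Continuous x' →
      (∀ t, |x t - x' t| ≤ F e t) →
      eLpNorm (fun y => A x y - A x' y) 1 ν ≤ ENNReal.ofReal (CK * ∫ t, F e t ∂μ) := by
    intro x x' hx hx' hxx'
    have hptwise : ∀ᵐ y ∂ν, |A x y - A x' y| ≤ g y := by
      filter_upwards [(hprod x hx).prod_right_ae, (hprod x' hx').prod_right_ae,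
        (hprod (F e) (hF_cont e)).prod_right_ae] with y h1 h2 h3
      have hsub : A x y - A x' y = ∫ t, K y t * (x t - x' t) ∂μ := by
        rw [show (fun t => K y t * (x t - x' t)) = fun t => K y t * x t - K y t * x' t by
          funext t; ring]
        rw [integral_sub h1 h2]
      rw [hsub]
      have hsub' : Integrable (fun t => K y t * (x t - x' t)) μ := by
        exact (h1.sub h2).congr (Filter.Eventually.of_forall fun t => by simp only [Pi.sub_apply]; ring)
      calc |∫ t, K y t * (x t - x' t) ∂μ| ≤ ∫ t, |K y t * (x t - x' t)| ∂μ := by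
            simpa only [Real.norm_eq_abs] using
              norm_integral_le_integral_norm (f := fun t => K y t * (x t - x' t)) (μ := μ)
        _ ≤ ∫ t, K y t * F e t ∂μ := by
            refine integral_mono hsub'.abs h3 fun t => ?_
            rw [abs_mul, abs_of_nonneg (hK_nonneg y t)]
            exact mul_le_mul_of_nonneg_left (hxx' t) (hK_nonneg y t)
    rw [eLpNorm_one_eq_lintegral_enorm]
    calc ∫⁻ y, ‖A x y - A x' y‖ₑ ∂ν ≤ ∫⁻ y, ENNReal.ofReal (g y) ∂ν := by
          refine lintegral_mono_ae ?_
          filter_upwards [hptwise] with y hy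
          rw [Real.enorm_eq_ofReal_abs]
          exact ENNReal.ofReal_le_ofReal hy
      _ = ENNReal.ofReal (∫ y, g y ∂ν) :=
          (ofReal_integral_eq_lintegral_ofReal hg_int
            (Filter.Eventually.of_forall hg_nonneg)).symm
      _ = ENNReal.ofReal (CK * ∫ t, F e t ∂μ) := by rw [hg_val]
  refine le_antisymm ?_ ?_
  · -- upper bound : use the method Φ* z = A ((F (z+e) - F (e-z))/2)
    set xz : (Fin n → ℝ) → M → ℝ :=
      fun z t => (F (fun j => z j + e j) t - F (fun j => e j - z j) t) / 2 with hxzdef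
    have hxz_cont : ∀ z, Continuous (xz z) :=
      fun z => ((hF_cont _).sub (hF_cont _)).div_const 2
    have hΦmem : ∀ z, MemLp (fun y => A (xz z) y) 1 ν := by
      intro z
      rw [memLp_one_iff_integrable]
      exact (hprod (xz z) (hxz_cont z)).integral_prod_left
    refine iInf_le_of_le ⟨fun z y => A (xz z) y, hΦmem⟩ ?_
    refine iSup_le fun x => iSup_le fun hx => iSup_le fun z => iSup_le fun hz => ?_
    have hxcont : Continuous x := cont_of_mod x hx.2
    -- pointwise bound |x - xz z| ≤ τ
    have hmain : ∀ t, |x t - xz z t| ≤ F e t := by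
      intro t
      have h1 : x t ≤ F (fun j => z j + e j) t := by
        refine hle_F _ t _ fun j => ?_
        have ha := abs_le.mp (hx.2 t (q j))
        have hb := abs_le.mp (hz j)
        linarith [ha.1, ha.2, hb.1, hb.2]
      have h2 : -x t ≤ F (fun j => e j - z j) t := by
        refine hle_F _ t _ fun j => ?_
        have ha := abs_le.mp (hx.2 t (q j))
        have hb := abs_le.mp (hz j)
        linarith [ha.1, ha.2, hb.1, hb.2]
      have h3 : (F (fun j => z j + e j) t + F (fun j => e j - z j) t) / 2 ≤ F e t := by
        refine hle_F _ t _ fun j => ?_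
        have ha := hF_le (fun j => z j + e j) t j
        have hb := hF_le (fun j => e j - z j) t j
        linarith
      rw [hxzdef, abs_le]
      constructor <;> simp only [] <;> linarith
    exact key x (xz z) hxcont (hxz_cont z) hmain
  · -- lower bound
    refine le_iInf fun Φp => ?_
    obtain ⟨Φ, hΦ⟩ := Φp
    have hτW : F e ∈ W := ⟨(hF_cont e).measurable, fun t t' => hF_abs e t t'⟩
    have hτz : ∀ j, |(0 : Fin n → ℝ) j - F e (q j)| ≤ e j := by
      intro j
      rw [Pi.zero_apply, zero_sub, abs_neg, abs_of_nonneg (hτ_nonneg _)]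
      exact hτq j
    have hnegτW : (fun t => -F e t) ∈ W := by
      refine ⟨(hF_cont e).neg.measurable, fun t t' => ?_⟩
      have := hF_abs e t' t
      rw [dist_comm t' t] at this
      calc |(-F e t) - (-F e t')| = |F e t' - F e t' + (F e t' - F e t)| := by ring_nf
        _ = |F e t' - F e t| := by rw [sub_self, zero_add]
        _ ≤ ω (dist t t') := this
    have hnegτz : ∀ j, |(0 : Fin n → ℝ) j - (fun t => -F e t) (q j)| ≤ e j := by
      intro j
      simp only [Pi.zero_apply, zero_sub, neg_neg]
      rw [abs_of_nonneg (hτ_nonneg _)]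
      exact hτq j
    have h₁ : eLpNorm (fun y => A (F e) y - Φ 0 y) 1 ν ≤ Err Φ := by
      refine le_trans ?_ (le_iSup _ (F e))
      refine le_trans ?_ (le_iSup _ hτW)
      refine le_trans ?_ (le_iSup _ (0 : Fin n → ℝ))
      exact le_trans le_rfl (le_iSup (fun _ => _) hτz)
    have h₂ : eLpNorm (fun y => A (fun t => -F e t) y - Φ 0 y) 1 ν ≤ Err Φ := by
      refine le_trans ?_ (le_iSup _ (fun t => -F e t))
      refine le_trans ?_ (le_iSup _ hnegτW)
      refine le_trans ?_ (le_iSup _ (0 : Fin n → ℝ))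
      exact le_trans le_rfl (le_iSup (fun _ => _) hnegτz)
    -- A(-τ) = -Aτ
    have hAneg : ∀ y, A (fun t => -F e t) y = -(A (F e) y) := by
      intro y
      show (∫ t, K y t * (-F e t) ∂μ) = -(∫ t, K y t * F e t ∂μ)
      rw [← integral_neg]
      congr 1; funext t; ring
    have h₂' : eLpNorm (fun y => A (F e) y + Φ 0 y) 1 ν ≤ Err Φ := by
      have : (fun y => A (fun t => -F e t) y - Φ 0 y) =
          fun y => -(A (F e) y + Φ 0 y) := by
        funext y; rw [hAneg y]; ring
      rw [this] at h₂
      rwa [show (fun y => -(A (F e) y + Φ 0 y)) = -(fun y => A (F e) y + Φ 0 y) from rfl,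
        eLpNorm_neg] at h₂
    -- measurability of Aτ and Φ 0
    have hAτ_meas : AEStronglyMeasurable (fun y => A (F e) y) ν :=
      (hprod (F e) (hF_cont e)).aestronglyMeasurable.integral_prod_right'
    have hΦ0_meas : AEStronglyMeasurable (Φ 0) ν := (hΦ 0).1
    -- 2 * eLpNorm (Aτ) ≤ 2 * Err Φ
    have hdouble : eLpNorm (fun y => 2 * A (F e) y) 1 ν =
        2 * eLpNorm (fun y => A (F e) y) 1 ν := by
      rw [eLpNorm_one_eq_lintegral_enorm, eLpNorm_one_eq_lintegral_enorm,
        ← lintegral_const_mul' 2 _ (by norm_num)]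
      congr 1; funext y
      rw [enorm_mul]
      congr 1
      rw [Real.enorm_eq_ofReal (by norm_num : (0:ℝ) ≤ 2)]
      exact ENNReal.ofReal_ofNat 2
    have htri : eLpNorm (fun y => 2 * A (F e) y) 1 ν ≤
        eLpNorm (fun y => A (F e) y - Φ 0 y) 1 ν +
          eLpNorm (fun y => A (F e) y + Φ 0 y) 1 ν := by
      have heq : (fun y => 2 * A (F e) y) =
          (fun y => A (F e) y - Φ 0 y) + fun y => A (F e) y + Φ 0 y := by
        funext y; simp only [Pi.add_apply]; ring
      rw [heq]
      exact eLpNorm_add_le (hAτ_meas.sub hΦ0_meas) (hAτ_meas.add hΦ0_meas) le_rfl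
    have hfinal : 2 * eLpNorm (fun y => A (F e) y) 1 ν ≤ 2 * Err Φ := by
      rw [← hdouble]
      calc eLpNorm (fun y => 2 * A (F e) y) 1 ν ≤ _ + _ := htri
        _ ≤ Err Φ + Err Φ := add_le_add h₁ h₂'
        _ = 2 * Err Φ := (two_mul _).symm
    have : eLpNorm (fun y => A (F e) y) 1 ν ≤ Err Φ :=
      (ENNReal.mul_le_mul_iff_right (two_ne_zero) ENNReal.ofNat_ne_top).mp hfinal
    calc ENNReal.ofReal (CK * ∫ t, tauOR ω q e t ∂μ)
        = eLpNorm (fun y => A (F e) y) 1 ν := by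
          rw [heLpAτ]; rfl
      _ ≤ Err Φ := this
end

section
/- Optimal recovery of the solution operator of a Volterra equation of the second kind in L¹: Let [a,b] ⊂ ℝ with Lebesgue measure μ, let k : [a,b]² → ℝ be continuous and nonnegative, let k_1 := k, k_{n}(t,s) := ∫_s^t k(t,u) k_{n−1}(u,s) du for n ≥ 2, and Γ(t,s) := Σ_{n=1}^∞ k_n(t,s) (the resolvent kernel; the series converges for a ≤ s ≤ t ≤ b). Define A f(t) := f(t) + ∫_a^t Γ(t,s) f(s) ds, mapping H^ω([a,b]) into L¹([a,b]). Then Φ := A ∘ L_{ω,Q,e} is an optimal method of recovery of A on H^ω([a,b]) based on information I_Q with U_e-error, and E(A; H^ω([a,b]); I_Q; U_e) = ∫_a^b ( 1 + ∫_s^b Γ(t,s) dt ) τ_{ω,Q,e}(s) ds. -/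
open MeasureTheory intervalIntegral
open scoped ENNReal

/-- The iterated kernels of a Volterra integral equation of the second kind:
`k_1 = k`, `k_{n+1}(t,s) = ∫_s^t k(t,u) k_n(u,s) du`. -/
noncomputable def volterraIter (k : ℝ → ℝ → ℝ) : ℕ → ℝ → ℝ → ℝ
  | 0 => k
  | (nn + 1) => fun t s => ∫ u in s..t, k t u * volterraIter k nn u s

/-- The resolvent kernel `Γ(t,s) = Σ_{n≥1} k_n(t,s)` of a Volterra equation. -/
noncomputable def volterraResolvent (k : ℝ → ℝ → ℝ) (t s : ℝ) : ℝ :=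
  ∑' nn : ℕ, volterraIter k nn t s

theorem volterraIter_cont (k : ℝ → ℝ → ℝ) (hk : Continuous fun p : ℝ × ℝ => k p.1 p.2) :
    ∀ m, Continuous fun p : ℝ × ℝ => volterraIter k m p.1 p.2 := by
  intro m
  induction m with
  | zero => exact hk
  | succ m ih =>
    have hc : Continuous fun q : (ℝ × ℝ) × ℝ => k q.1.1 q.2 * volterraIter k m q.2 q.1.2 := by
      exact (hk.comp ((continuous_fst.comp continuous_fst).prodMk continuous_snd)).mul
        (ih.comp (continuous_snd.prodMk (continuous_snd.comp continuous_fst)))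
    have h1 : Continuous fun p : ℝ × ℝ => ∫ u in (0:ℝ)..p.1, k p.1 u * volterraIter k m u p.2 :=
      intervalIntegral.continuous_parametric_intervalIntegral_of_continuous
        (f := fun (p : ℝ × ℝ) (u : ℝ) => k p.1 u * volterraIter k m u p.2) hc continuous_fst
    have h2 : Continuous fun p : ℝ × ℝ => ∫ u in (0:ℝ)..p.2, k p.1 u * volterraIter k m u p.2 :=
      intervalIntegral.continuous_parametric_intervalIntegral_of_continuous
        (f := fun (p : ℝ × ℝ) (u : ℝ) => k p.1 u * volterraIter k m u p.2) hc continuous_snd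
    have : (fun p : ℝ × ℝ => volterraIter k (m+1) p.1 p.2)
        = fun p => (∫ u in (0:ℝ)..p.1, k p.1 u * volterraIter k m u p.2)
          - ∫ u in (0:ℝ)..p.2, k p.1 u * volterraIter k m u p.2 := by
      funext p
      have hint : ∀ c d : ℝ, IntervalIntegrable
          (fun u => k p.1 u * volterraIter k m u p.2) volume c d := by
        intro c d
        exact ((hk.comp (continuous_const.prodMk continuous_id)).mul
          (ih.comp (continuous_id.prodMk continuous_const))).intervalIntegrable c d
      exact (intervalIntegral.integral_interval_sub_left (hint 0 p.1) (hint 0 p.2)).symm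
    rw [this]
    exact h1.sub h2

theorem abs_integral_abs_pow (m : ℕ) (y : ℝ) :
    |∫ x in (0:ℝ)..y, |x|^m| = |y|^(m+1)/(m+1) := by
  rcases le_or_gt 0 y with hy | hy
  · have : ∫ x in (0:ℝ)..y, |x|^m = ∫ x in (0:ℝ)..y, x^m := by
      apply intervalIntegral.integral_congr
      intro x hx
      rw [Set.uIcc_of_le hy] at hx
      simp [abs_of_nonneg hx.1]
    rw [this, integral_pow]
    simp only [zero_pow (Nat.succ_ne_zero m), sub_zero]
    rw [abs_div, abs_of_nonneg (pow_nonneg hy _), abs_of_nonneg hy,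
      abs_of_nonneg (by positivity : (0:ℝ) ≤ (m:ℝ)+1)]
  · have : ∫ x in (0:ℝ)..y, |x|^m = ∫ x in (0:ℝ)..y, (-1)^m * x^m := by
      apply intervalIntegral.integral_congr
      intro x hx
      rw [Set.uIcc_of_ge hy.le] at hx
      show |x|^m = (-1)^m * x^m
      rw [abs_of_nonpos hx.2]
      ring
    rw [this, intervalIntegral.integral_const_mul, integral_pow]
    simp only [zero_pow (Nat.succ_ne_zero m), sub_zero]
    rw [abs_mul, abs_pow, abs_neg, abs_one, one_pow, one_mul, abs_div,
      abs_of_nonneg (by positivity : (0:ℝ) ≤ (m:ℝ)+1), ← abs_pow]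

theorem volterraIter_bound (k : ℝ → ℝ → ℝ) (hk : Continuous fun p : ℝ × ℝ => k p.1 p.2) :
    ∀ (m : ℕ) (t s c : ℝ), 0 ≤ c →
      (∀ x ∈ Set.uIcc s t, ∀ y ∈ Set.uIcc s t, |k x y| ≤ c) →
      |volterraIter k m t s| ≤ c^(m+1) * |t-s|^m / m.factorial := by
  intro m
  induction m with
  | zero =>
    intro t s c hc hbd
    simpa [volterraIter] using hbd t Set.right_mem_uIcc s Set.left_mem_uIcc
  | succ m ih =>
    intro t s c hc hbd
    have key : |volterraIter k (m+1) t s| ≤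
        |∫ u in s..t, c^(m+2) / m.factorial * |u - s|^m| := by
      show |∫ u in s..t, k t u * volterraIter k m u s| ≤ _
      rw [← Real.norm_eq_abs (∫ u in s..t, k t u * volterraIter k m u s)]
      apply intervalIntegral.norm_integral_le_abs_of_norm_le
      · filter_upwards [ae_restrict_mem measurableSet_uIoc] with u hu
        have huI : u ∈ Set.uIcc s t := Set.uIoc_subset_uIcc hu
        have h1 : |k t u| ≤ c := hbd t Set.right_mem_uIcc u huI
        have hsub : Set.uIcc s u ⊆ Set.uIcc s t :=
          Set.uIcc_subset_uIcc Set.left_mem_uIcc huI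
        have h2 : |volterraIter k m u s| ≤ c^(m+1) * |u-s|^m / m.factorial :=
          ih u s c hc (fun x hx y hy => hbd x (hsub hx) y (hsub hy))
        rw [Real.norm_eq_abs, abs_mul]
        calc |k t u| * |volterraIter k m u s| ≤ c * (c^(m+1) * |u-s|^m / m.factorial) := by
              apply mul_le_mul h1 h2 (abs_nonneg _) hc
          _ = c^(m+2) / m.factorial * |u - s|^m := by ring
      · exact ((continuous_const.mul ((continuous_id.sub continuous_const).abs.pow m))).intervalIntegrable _ _
    have comp : |∫ u in s..t, c^(m+2) / m.factorial * |u - s|^m|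
        = c^(m+2) * |t-s|^(m+1) / (m+1).factorial := by
      rw [intervalIntegral.integral_const_mul]
      have h3 : (∫ u in s..t, |u - s|^m) = ∫ x in (0:ℝ)..(t-s), |x|^m := by
        have := intervalIntegral.integral_comp_sub_right (fun x => |x|^m) s (a := s) (b := t)
        simpa using this
      rw [h3, abs_mul, abs_integral_abs_pow]
      rw [abs_div, abs_of_nonneg (by positivity : (0:ℝ) ≤ c^(m+2)),
        abs_of_nonneg (by positivity : (0:ℝ) ≤ (m.factorial:ℝ))]
      rw [Nat.factorial_succ]
      have hf : (m.factorial:ℝ) ≠ 0 := Nat.cast_ne_zero.2 m.factorial_ne_zero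
      have hm : (m:ℝ)+1 ≠ 0 := by positivity
      push_cast
      field_simp
    calc |volterraIter k (m+1) t s| ≤ _ := key
      _ = c^(m+2) * |t-s|^(m+1) / (m+1).factorial := comp

theorem summable_aux (c r : ℝ) : Summable (fun m : ℕ => c^(m+1) * r^m / m.factorial) := by
  have h : ∀ m : ℕ, c^(m+1) * r^m / m.factorial = c * ((c*r)^m / m.factorial) := by
    intro m; rw [mul_pow]; ring
  simp_rw [h]
  exact (Real.summable_pow_div_factorial (c*r)).mul_left c

theorem volterraIter_summable (k : ℝ → ℝ → ℝ) (hk : Continuous fun p : ℝ × ℝ => k p.1 p.2) :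
    ∀ t s : ℝ, Summable (fun m => volterraIter k m t s) := by
  intro t s
  have hcomp : IsCompact (Set.uIcc s t ×ˢ Set.uIcc s t) := isCompact_uIcc.prod isCompact_uIcc
  obtain ⟨c, hc⟩ := hcomp.exists_bound_of_continuousOn hk.continuousOn
  set c' := max c 0 with hc'
  have hb : ∀ x ∈ Set.uIcc s t, ∀ y ∈ Set.uIcc s t, |k x y| ≤ c' := by
    intro x hx y hy
    have := hc (x, y) (Set.mk_mem_prod hx hy)
    rw [Real.norm_eq_abs] at this
    exact le_trans this (le_max_left _ _)
  apply Summable.of_norm_bounded (summable_aux c' |t - s|)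
  intro m
  exact volterraIter_bound k hk m t s c' (le_max_right _ _) hb

theorem volterraResolvent_measurable (k : ℝ → ℝ → ℝ)
    (hk : Continuous fun p : ℝ × ℝ => k p.1 p.2) :
    Measurable fun p : ℝ × ℝ => volterraResolvent k p.1 p.2 := by
  apply measurable_of_tendsto_metrizable
    (f := fun N (p : ℝ × ℝ) => ∑ m ∈ Finset.range N, volterraIter k m p.1 p.2)
  · intro N
    exact Finset.measurable_sum _ (fun m _ => (volterraIter_cont k hk m).measurable)
  · rw [tendsto_pi_nhds]
    intro p
    exact ((volterraIter_summable k hk p.1 p.2).hasSum).tendsto_sum_nat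

theorem volterraResolvent_nonneg (k : ℝ → ℝ → ℝ) (hk_nonneg : ∀ t s, 0 ≤ k t s) :
    ∀ t s : ℝ, s ≤ t → 0 ≤ volterraResolvent k t s := by
  have hiter : ∀ m, ∀ s t : ℝ, s ≤ t → 0 ≤ volterraIter k m t s := by
    intro m
    induction m with
    | zero => intro s t _; exact hk_nonneg t s
    | succ m ih =>
      intro s t hst
      apply intervalIntegral.integral_nonneg hst
      intro u hu
      exact mul_nonneg (hk_nonneg t u) (ih s u hu.1)
  intro t s hst
  exact tsum_nonneg (fun m => hiter m s t hst)

theorem volterraResolvent_bound (k : ℝ → ℝ → ℝ)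
    (hk : Continuous fun p : ℝ × ℝ => k p.1 p.2) (c : ℝ) (hc : 0 ≤ c) (t s : ℝ)
    (hb : ∀ x ∈ Set.uIcc s t, ∀ y ∈ Set.uIcc s t, |k x y| ≤ c) (r : ℝ) (hr : |t - s| ≤ r) :
    |volterraResolvent k t s| ≤ ∑' m : ℕ, c^(m+1) * r^m / m.factorial := by
  have hr0 : 0 ≤ r := le_trans (abs_nonneg _) hr
  have h1 : ∀ m : ℕ, |volterraIter k m t s| ≤ c^(m+1) * r^m / m.factorial := by
    intro m
    refine le_trans (volterraIter_bound k hk m t s c hc hb) ?_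
    gcongr
  calc |volterraResolvent k t s| ≤ ∑' m : ℕ, |volterraIter k m t s| := by
        rw [← Real.norm_eq_abs]
        apply norm_tsum_le_tsum_norm
        exact (volterraIter_summable k hk t s).abs
    _ ≤ ∑' m : ℕ, c^(m+1) * r^m / m.factorial :=
        Summable.tsum_le_tsum h1 (volterraIter_summable k hk t s).abs (summable_aux c r)

section
variable {M : Type*} [MetricSpace M] (ω : ℝ → ℝ) {n : ℕ} (hn : 0 < n)
  (q : Fin n → M) (e : Fin n → ℝ)

include hn

theorem tau_le (t : M) (j : Fin n) : tauOR ω q e t ≤ e j + ω (dist t (q j)) := by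
  haveI : Nonempty (Fin n) := ⟨⟨0, hn⟩⟩
  exact ciInf_le (Set.Finite.bddBelow (Set.finite_range _)) j

theorem filt_nonempty (t : M) :
    haveI := Classical.dec
    (Finset.univ.filter fun j => tauOR ω q e t = e j + ω (dist t (q j))).Nonempty := by
  classical
  haveI : Nonempty (Fin n) := ⟨⟨0, hn⟩⟩
  obtain ⟨j, hj⟩ := Finite.exists_min (fun j => e j + ω (dist t (q j)))
  refine ⟨j, Finset.mem_filter.2 ⟨Finset.mem_univ _, ?_⟩⟩
  exact le_antisymm (tau_le ω hn q e t j) (le_ciInf hj)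

theorem tau_nonneg (hω_nonneg : ∀ s : ℝ, 0 ≤ s → 0 ≤ ω s) (he : ∀ j, 0 ≤ e j) (t : M) :
    0 ≤ tauOR ω q e t := by
  haveI : Nonempty (Fin n) := ⟨⟨0, hn⟩⟩
  exact le_ciInf fun j => add_nonneg (he j) (hω_nonneg _ dist_nonneg)

theorem tau_lip (hω_mono : MonotoneOn ω (Set.Ici 0))
    (hω_subadd : ∀ s t : ℝ, 0 ≤ s → 0 ≤ t → ω (s + t) ≤ ω s + ω t)
    (t t' : M) : |tauOR ω q e t - tauOR ω q e t'| ≤ ω (dist t t') := by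
  haveI : Nonempty (Fin n) := ⟨⟨0, hn⟩⟩
  have key : ∀ x y : M, tauOR ω q e x - tauOR ω q e y ≤ ω (dist x y) := by
    intro x y
    have h1 : tauOR ω q e x - ω (dist x y) ≤ tauOR ω q e y := by
      apply le_ciInf
      intro j
      have h2 : ω (dist x (q j)) ≤ ω (dist x y) + ω (dist y (q j)) := by
        calc ω (dist x (q j)) ≤ ω (dist x y + dist y (q j)) := by
              apply hω_mono (Set.mem_Ici.2 dist_nonneg)
                (Set.mem_Ici.2 (add_nonneg dist_nonneg dist_nonneg)) (dist_triangle x y (q j))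
          _ ≤ ω (dist x y) + ω (dist y (q j)) := hω_subadd _ _ dist_nonneg dist_nonneg
      have h3 := tau_le ω hn q e x j
      linarith
    linarith
  rw [abs_sub_le_iff]
  exact ⟨key t t', by rw [dist_comm]; exact key t' t⟩

theorem tau_continuous (hω0 : ω 0 = 0) (hω_cont : ContinuousOn ω (Set.Ici 0))
    (hω_mono : MonotoneOn ω (Set.Ici 0))
    (hω_subadd : ∀ s t : ℝ, 0 ≤ s → 0 ≤ t → ω (s + t) ≤ ω s + ω t) :
    Continuous (tauOR ω q e) := by
  rw [continuous_iff_continuousAt]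
  intro x
  rw [ContinuousAt, tendsto_iff_dist_tendsto_zero]
  have hg : Filter.Tendsto (fun t => ω (dist t x)) (nhds x) (nhds 0) := by
    have hd : Filter.Tendsto (fun t : M => dist t x) (nhds x) (nhdsWithin 0 (Set.Ici 0)) := by
      rw [tendsto_nhdsWithin_iff]
      constructor
      · have := (continuous_id.dist (continuous_const : Continuous fun _ : M => x)).tendsto x
        simpa using this
      · exact Filter.Eventually.of_forall fun t => Set.mem_Ici.2 dist_nonneg
    have hω : Filter.Tendsto ω (nhdsWithin 0 (Set.Ici 0)) (nhds 0) := by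
      have := hω_cont 0 (Set.mem_Ici.2 le_rfl)
      rw [ContinuousWithinAt, hω0] at this
      exact this
    exact hω.comp hd
  apply squeeze_zero (fun t => dist_nonneg) _ hg
  intro t
  rw [Real.dist_eq]
  exact tau_lip ω hn q e hω_mono hω_subadd t x

theorem Lmeth_eq (z : Fin n → ℝ) (t : M) :
    ∃ j : Fin n, LmethOR ω q e z t = z j ∧ tauOR ω q e t = e j + ω (dist t (q j)) := by
  classical
  have hne := filt_nonempty ω hn q e t
  refine ⟨(Finset.univ.filter fun j => tauOR ω q e t = e j + ω (dist t (q j))).min' hne, ?_, ?_⟩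
  · rw [LmethOR]
    rw [dif_pos]
  · exact (Finset.mem_filter.1 (Finset.min'_mem _ hne)).2

end

section
variable (ω : ℝ → ℝ) {n : ℕ} (hn : 0 < n) (q : Fin n → ℝ) (e : Fin n → ℝ)

include hn

theorem Lmeth_measurable (hω0 : ω 0 = 0) (hω_cont : ContinuousOn ω (Set.Ici 0))
    (hω_mono : MonotoneOn ω (Set.Ici 0))
    (hω_subadd : ∀ s t : ℝ, 0 ≤ s → 0 ≤ t → ω (s + t) ≤ ω s + ω t)
    (z : Fin n → ℝ) : Measurable (LmethOR ω q e z) := by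
  classical
  have hτ : Continuous (tauOR ω q e) := tau_continuous ω hn q e hω0 hω_cont hω_mono hω_subadd
  have hg : ∀ j, Continuous fun t : ℝ => e j + ω (dist t (q j)) := by
    intro j
    exact continuous_const.add (hω_cont.comp_continuous
      (continuous_id.dist continuous_const) (fun t => Set.mem_Ici.2 dist_nonneg))
  have hA : ∀ j, MeasurableSet {t : ℝ | tauOR ω q e t = e j + ω (dist t (q j))} :=
    fun j => measurableSet_eq_fun hτ.measurable (hg j).measurable
  have hLz : LmethOR ω q e z = fun t => z ((Finset.univ.filter
      fun j => tauOR ω q e t = e j + ω (dist t (q j))).min' (filt_nonempty ω hn q e t)) := by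
    funext t
    rw [LmethOR, dif_pos (filt_nonempty ω hn q e t)]
  rw [hLz]
  apply (measurable_of_countable z).comp
  apply measurable_to_countable'
  intro j
  have hset : (fun t => (Finset.univ.filter
        fun j => tauOR ω q e t = e j + ω (dist t (q j))).min'
          (filt_nonempty ω hn q e t)) ⁻¹' {j}
      = {t : ℝ | tauOR ω q e t = e j + ω (dist t (q j))} ∩
        ⋂ (i : Fin n) (_ : i < j), {t : ℝ | tauOR ω q e t = e i + ω (dist t (q i))}ᶜ := by
    ext t
    simp only [Set.mem_preimage, Set.mem_singleton_iff, Set.mem_inter_iff, Set.mem_setOf_eq,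
      Set.mem_iInter, Set.mem_compl_iff]
    constructor
    · intro h
      constructor
      · have := Finset.min'_mem _ (filt_nonempty ω hn q e t)
        rw [h, Finset.mem_filter] at this
        exact this.2
      · intro i hij hi
        have : j ≤ i := by
          rw [← h]
          exact Finset.min'_le (Finset.univ.filter
            fun j => tauOR ω q e t = e j + ω (dist t (q j))) i
            (Finset.mem_filter.2 ⟨Finset.mem_univ _, hi⟩)
        exact absurd this (not_le.2 hij)
    · rintro ⟨hj, hlt⟩
      have h1 : (Finset.univ.filter fun j => tauOR ω q e t = e j + ω (dist t (q j))).min'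
          (filt_nonempty ω hn q e t) ≤ j :=
        Finset.min'_le (Finset.univ.filter
          fun j' => tauOR ω q e t = e j' + ω (dist t (q j'))) j
          (Finset.mem_filter.2 ⟨Finset.mem_univ _, hj⟩)
      have h2 := Finset.min'_mem _ (filt_nonempty ω hn q e t)
      rw [Finset.mem_filter] at h2
      by_contra hne
      exact hlt _ (lt_of_le_of_ne h1 hne) h2.2
  rw [hset]
  exact (hA j).inter (MeasurableSet.iInter fun i => MeasurableSet.iInter fun _ => (hA i).compl)

theorem Lmeth_bound (z : Fin n → ℝ) (c : ℝ) (hc : ∀ j, |z j| ≤ c) (t : ℝ) :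
    |LmethOR ω q e z t| ≤ c := by
  obtain ⟨j, hj, -⟩ := Lmeth_eq ω hn q e z t
  rw [hj]; exact hc j

theorem Lmeth_close (a b : ℝ)
    (hq : ∀ j, q j ∈ Set.Icc a b) (f : ℝ → ℝ)
    (hf : ∀ t ∈ Set.Icc a b, ∀ t' ∈ Set.Icc a b, |f t - f t'| ≤ ω (dist t t'))
    (z : Fin n → ℝ) (hz : ∀ j, |z j - f (q j)| ≤ e j) (t : ℝ) (ht : t ∈ Set.Icc a b) :
    |f t - LmethOR ω q e z t| ≤ tauOR ω q e t := by
  obtain ⟨j, hj, hτ⟩ := Lmeth_eq ω hn q e z t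
  rw [hj, hτ]
  calc |f t - z j| ≤ |f t - f (q j)| + |f (q j) - z j| := abs_sub_le _ _ _
    _ ≤ ω (dist t (q j)) + e j := by
        gcongr
        · exact hf t ht (q j) (hq j)
        · rw [abs_sub_comm]; exact hz j
    _ = e j + ω (dist t (q j)) := by ring

end

lemma integrableOn_of_bdd {h : ℝ → ℝ} {s : Set ℝ} (hs : MeasurableSet s)
    (hμ : MeasureTheory.volume s ≠ ⊤) (hm : AEStronglyMeasurable h (volume.restrict s))
    {c : ℝ} (hb : ∀ x ∈ s, |h x| ≤ c) : IntegrableOn h s := by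
  refine ⟨hm, ?_⟩
  apply HasFiniteIntegral.restrict_of_bounded (C := c) hμ.lt_top
  exact (ae_restrict_iff' hs).2 (Filter.Eventually.of_forall fun x hx => by
    rw [Real.norm_eq_abs]; exact hb x hx)

lemma sm_param (a : ℝ) {F : ℝ → ℝ → ℝ} (hF : Measurable (Function.uncurry F)) :
    StronglyMeasurable (fun t => ∫ s in Set.Ioc a t, F t s) := by
  have hS : MeasurableSet {p : ℝ × ℝ | a < p.2 ∧ p.2 ≤ p.1} :=
    ((isOpen_lt continuous_const continuous_snd).measurableSet).inter
      ((isClosed_le continuous_snd continuous_fst).measurableSet)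
  have key : ∀ t, ∫ s in Set.Ioc a t, F t s
      = ∫ s, ({p : ℝ × ℝ | a < p.2 ∧ p.2 ≤ p.1}.indicator (Function.uncurry F)) (t, s) := by
    intro t
    rw [← MeasureTheory.integral_indicator measurableSet_Ioc]
    apply MeasureTheory.integral_congr_ae
    apply Filter.EventuallyEq.of_eq
    funext s
    by_cases hs : s ∈ Set.Ioc a t
    · rw [Set.indicator_of_mem hs, Set.indicator_of_mem (by exact ⟨hs.1, hs.2⟩)]
      rfl
    · rw [Set.indicator_of_notMem hs, Set.indicator_of_notMem (by
        simp only [Set.mem_setOf_eq]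
        rw [Set.mem_Ioc] at hs
        tauto)]
  simp_rw [key]
  exact ((hF.indicator hS).stronglyMeasurable).integral_prod_right'

lemma sm_param' (b : ℝ) {F : ℝ → ℝ → ℝ} (hF : Measurable (Function.uncurry F)) :
    StronglyMeasurable (fun s => ∫ t in Set.Ioc s b, F s t) := by
  have hS : MeasurableSet {p : ℝ × ℝ | p.1 < p.2 ∧ p.2 ≤ b} :=
    ((isOpen_lt continuous_fst continuous_snd).measurableSet).inter
      ((isClosed_le continuous_snd continuous_const).measurableSet)
  have key : ∀ s, ∫ t in Set.Ioc s b, F s t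
      = ∫ t, ({p : ℝ × ℝ | p.1 < p.2 ∧ p.2 ≤ b}.indicator (Function.uncurry F)) (s, t) := by
    intro s
    rw [← MeasureTheory.integral_indicator measurableSet_Ioc]
    apply MeasureTheory.integral_congr_ae
    apply Filter.EventuallyEq.of_eq
    funext t
    by_cases ht : t ∈ Set.Ioc s b
    · rw [Set.indicator_of_mem ht, Set.indicator_of_mem (by exact ⟨ht.1, ht.2⟩)]
      rfl
    · rw [Set.indicator_of_notMem ht, Set.indicator_of_notMem (by
        simp only [Set.mem_setOf_eq]
        rw [Set.mem_Ioc] at ht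
        tauto)]
  simp_rw [key]
  exact ((hF.indicator hS).stronglyMeasurable).integral_prod_right'

theorem fubini_tri (a b : ℝ) (hab : a ≤ b) (Γ : ℝ → ℝ → ℝ)
    (hΓm : Measurable fun p : ℝ × ℝ => Γ p.1 p.2) (CΓ : ℝ)
    (hΓb : ∀ t ∈ Set.Icc a b, ∀ s ∈ Set.Icc a b, |Γ t s| ≤ CΓ)
    (g : ℝ → ℝ) (hgm : Measurable g) (c : ℝ) (hgb : ∀ x ∈ Set.Icc a b, |g x| ≤ c) :
    (∫ t in a..b, (∫ s in a..t, Γ t s * g s)) = ∫ s in a..b, (∫ t in s..b, Γ t s) * g s := by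
  classical
  set ν := volume.restrict (Set.Ioc a b) with hν
  haveI : IsFiniteMeasure ν := ⟨by rw [hν, Measure.restrict_apply_univ]; exact measure_Ioc_lt_top⟩
  set H : ℝ × ℝ → ℝ := fun p => if a < p.2 ∧ p.2 ≤ p.1 then Γ p.1 p.2 * g p.2 else 0 with hH
  have hS : MeasurableSet {p : ℝ × ℝ | a < p.2 ∧ p.2 ≤ p.1} :=
    ((isOpen_lt continuous_const continuous_snd).measurableSet).inter
      ((isClosed_le continuous_snd continuous_fst).measurableSet)
  have hHm : Measurable H := Measurable.ite hS (hΓm.mul (hgm.comp measurable_snd)) measurable_const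
  set M : ℝ := max CΓ 0 * max c 0 with hM
  have hHb : ∀ p ∈ Set.Ioc a b ×ˢ Set.Ioc a b, ‖H p‖ ≤ M := by
    rintro ⟨t, s⟩ ⟨ht, hs⟩
    rw [Real.norm_eq_abs, hH]
    dsimp only
    split_ifs with hc
    · rw [abs_mul]
      apply mul_le_mul
      · exact le_trans (hΓb t (Set.Ioc_subset_Icc_self ht) s (Set.Ioc_subset_Icc_self hs))
          (le_max_left _ _)
      · exact le_trans (hgb s (Set.Ioc_subset_Icc_self hs)) (le_max_left _ _)
      · exact abs_nonneg _
      · exact le_max_right _ _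
    · rw [abs_zero, hM]; positivity
  have hHint : Integrable H (ν.prod ν) := by
    apply Integrable.mono' (integrable_const M) hHm.aestronglyMeasurable
    have hprod : ν.prod ν = (volume.prod volume).restrict (Set.Ioc a b ×ˢ Set.Ioc a b) := by
      rw [hν, Measure.prod_restrict]
    rw [hprod]
    filter_upwards [ae_restrict_mem (measurableSet_Ioc.prod measurableSet_Ioc)] with p hp
    exact hHb p hp
  have hswap := MeasureTheory.integral_integral_swap
    (f := fun t s => H (t, s)) (μ := ν) (ν := ν) (by exact hHint)
  -- identify LHS
  have hL : (∫ t in a..b, (∫ s in a..t, Γ t s * g s)) = ∫ t, (∫ s, H (t, s) ∂ν) ∂ν := by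
    rw [intervalIntegral.integral_of_le hab]
    apply MeasureTheory.setIntegral_congr_fun measurableSet_Ioc
    intro t ht
    have h1 : ∀ s : ℝ, H (t, s) = (Set.Ioc a t).indicator (fun s => Γ t s * g s) s := by
      intro s
      rw [hH, Set.indicator_apply]
      dsimp only
      by_cases hc : s ∈ Set.Ioc a t
      · rw [if_pos (show a < s ∧ s ≤ t from ⟨hc.1, hc.2⟩), if_pos hc]
      · rw [if_neg (show ¬(a < s ∧ s ≤ t) from fun hcon => hc ⟨hcon.1, hcon.2⟩), if_neg hc]
    calc (∫ s in a..t, Γ t s * g s)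
        = ∫ s in Set.Ioc a t, Γ t s * g s ∂(volume.restrict (Set.Ioc a b)) := by
          rw [intervalIntegral.integral_of_le ht.1.le, Measure.restrict_restrict measurableSet_Ioc,
            Set.Ioc_inter_Ioc, max_self, min_eq_left ht.2]
      _ = ∫ s, H (t, s) ∂ν := by
          rw [← MeasureTheory.integral_indicator measurableSet_Ioc]
          apply MeasureTheory.integral_congr_ae
          apply Filter.EventuallyEq.of_eq
          funext s
          rw [h1 s]
  -- identify RHS
  have hR : (∫ s in a..b, (∫ t in s..b, Γ t s) * g s) = ∫ s, (∫ t, H (t, s) ∂ν) ∂ν := by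
    rw [intervalIntegral.integral_of_le hab]
    apply MeasureTheory.setIntegral_congr_fun measurableSet_Ioc
    intro s hs
    have h1 : ∀ t : ℝ, H (t, s) = (Set.Ici s).indicator (fun t => Γ t s * g s) t := by
      intro t
      rw [hH, Set.indicator_apply]
      dsimp only
      by_cases hst : s ≤ t
      · rw [if_pos (show a < s ∧ s ≤ t from ⟨hs.1, hst⟩), if_pos (show t ∈ Set.Ici s from hst)]
      · rw [if_neg (show ¬(a < s ∧ s ≤ t) from fun hcon => hst hcon.2),
          if_neg (show t ∉ Set.Ici s from hst)]
    calc (∫ t in s..b, Γ t s) * g s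
        = ∫ t in s..b, Γ t s * g s := by rw [intervalIntegral.integral_mul_const]
      _ = ∫ t in Set.Ioc s b, Γ t s * g s ∂volume := by
          rw [intervalIntegral.integral_of_le hs.2]
      _ = ∫ t in Set.Icc s b, Γ t s * g s ∂volume := (integral_Icc_eq_integral_Ioc).symm
      _ = ∫ t in Set.Ici s, Γ t s * g s ∂(volume.restrict (Set.Ioc a b)) := by
          rw [Measure.restrict_restrict measurableSet_Ici]
          have hset : Set.Ici s ∩ Set.Ioc a b = Set.Icc s b := by
            ext t
            simp only [Set.mem_Icc, Set.mem_inter_iff, Set.mem_Ici, Set.mem_Ioc]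
            constructor
            · rintro ⟨h1, _, h3⟩; exact ⟨h1, h3⟩
            · rintro ⟨h1, h2⟩; exact ⟨h1, lt_of_lt_of_le hs.1 h1, h2⟩
          rw [hset]
      _ = ∫ t, H (t, s) ∂ν := by
          rw [← MeasureTheory.integral_indicator measurableSet_Ici]
          apply MeasureTheory.integral_congr_ae
          apply Filter.EventuallyEq.of_eq
          funext t
          rw [h1 t]
  rw [hL, hR]
  exact hswap

lemma elp_helper3 (a b : ℝ) (hab : a ≤ b) {B : ℝ → ℝ} :
    (∫ t, B t ∂(volume.restrict (Set.Icc a b))) = ∫ t in a..b, B t := by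
  rw [intervalIntegral.integral_of_le hab, ← integral_Icc_eq_integral_Ioc]

lemma elp_le (a b : ℝ) (hab : a ≤ b) {h B : ℝ → ℝ}
    (hB : IntegrableOn B (Set.Icc a b)) (hBnn : ∀ t ∈ Set.Icc a b, 0 ≤ B t)
    (hhB : ∀ t ∈ Set.Icc a b, |h t| ≤ B t) :
    eLpNorm h 1 (volume.restrict (Set.Icc a b)) ≤ ENNReal.ofReal (∫ t in a..b, B t) := by
  rw [eLpNorm_one_eq_lintegral_enorm]
  have h1 : (∫⁻ t, ‖h t‖ₑ ∂(volume.restrict (Set.Icc a b)))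
      ≤ ∫⁻ t, ENNReal.ofReal (B t) ∂(volume.restrict (Set.Icc a b)) := by
    apply lintegral_mono_ae
    filter_upwards [ae_restrict_mem measurableSet_Icc] with t ht
    rw [← ofReal_norm, Real.norm_eq_abs]
    exact ENNReal.ofReal_le_ofReal (hhB t ht)
  have h2 : (∫⁻ t, ENNReal.ofReal (B t) ∂(volume.restrict (Set.Icc a b)))
      = ENNReal.ofReal (∫ t, B t ∂(volume.restrict (Set.Icc a b))) :=
    (ofReal_integral_eq_lintegral_ofReal hB
      ((ae_restrict_iff' measurableSet_Icc).2 (Filter.Eventually.of_forall hBnn))).symm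
  rw [← elp_helper3 a b hab]
  exact h1.trans (le_of_eq h2)

lemma elp_eq (a b : ℝ) (hab : a ≤ b) {B : ℝ → ℝ}
    (hB : IntegrableOn B (Set.Icc a b)) (hBnn : ∀ t ∈ Set.Icc a b, 0 ≤ B t) :
    eLpNorm B 1 (volume.restrict (Set.Icc a b)) = ENNReal.ofReal (∫ t in a..b, B t) := by
  rw [eLpNorm_one_eq_lintegral_enorm]
  have h1 : (∫⁻ t, ‖B t‖ₑ ∂(volume.restrict (Set.Icc a b)))
      = ∫⁻ t, ENNReal.ofReal (B t) ∂(volume.restrict (Set.Icc a b)) := by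
    apply lintegral_congr_ae
    filter_upwards [ae_restrict_mem measurableSet_Icc] with t ht
    rw [← ofReal_norm, Real.norm_eq_abs, abs_of_nonneg (hBnn t ht)]
  have h2 : (∫⁻ t, ENNReal.ofReal (B t) ∂(volume.restrict (Set.Icc a b)))
      = ENNReal.ofReal (∫ t, B t ∂(volume.restrict (Set.Icc a b))) :=
    (ofReal_integral_eq_lintegral_ofReal hB
      ((ae_restrict_iff' measurableSet_Icc).2 (Filter.Eventually.of_forall hBnn))).symm
  rw [h1, h2, elp_helper3 a b hab]

set_option maxHeartbeats 1000000 in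
theorem main_core
    (a b : ℝ) (hab : a ≤ b)
    (k : ℝ → ℝ → ℝ) (hk_cont : Continuous fun p : ℝ × ℝ => k p.1 p.2)
    (hk_nonneg : ∀ t s, 0 ≤ k t s)
    (ω : ℝ → ℝ) (hω0 : ω 0 = 0)
    (hω_cont : ContinuousOn ω (Set.Ici 0))
    (hω_mono : MonotoneOn ω (Set.Ici 0))
    (hω_subadd : ∀ s t : ℝ, 0 ≤ s → 0 ≤ t → ω (s + t) ≤ ω s + ω t)
    (hω_nonneg : ∀ s : ℝ, 0 ≤ s → 0 ≤ ω s)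
    {n : ℕ} (hn : 0 < n) (q : Fin n → ℝ) (hq : ∀ j, q j ∈ Set.Icc a b)
    (e : Fin n → ℝ) (he : ∀ j, 0 ≤ e j)
    (Γ : ℝ → ℝ → ℝ) (hΓ : Γ = volterraResolvent k)
    (A : (ℝ → ℝ) → ℝ → ℝ) (hA : A = fun f t => f t + ∫ s in a..t, Γ t s * f s)
    (W : Set (ℝ → ℝ))
    (hW : W = {x | ∀ t ∈ Set.Icc a b, ∀ t' ∈ Set.Icc a b, |x t - x t'| ≤ ω (dist t t')})
    (μab : Measure ℝ) (hμ : μab = volume.restrict (Set.Icc a b))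
    (Err : ((Fin n → ℝ) → ℝ → ℝ) → ℝ≥0∞)
    (hErr : Err = fun Φ => ⨆ f ∈ W, ⨆ z : Fin n → ℝ, ⨆ (_ : ∀ j, |z j - f (q j)| ≤ e j),
        eLpNorm (fun t => A f t - Φ z t) 1 μab)
    (Φ₀ : (Fin n → ℝ) → ℝ → ℝ) (hΦ₀ : Φ₀ = fun z => A (LmethOR ω q e z)) :
    (⨅ Φ : {Φ : (Fin n → ℝ) → ℝ → ℝ // ∀ z, MemLp (Φ z) 1 μab}, Err Φ.1) = Err Φ₀ ∧
      Err Φ₀ = ENNReal.ofReal (∫ s in a..b, (1 + ∫ t in s..b, Γ t s) * tauOR ω q e s) := by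
  subst hΓ hA hW hμ hErr hΦ₀
  beta_reduce
  set Γ := volterraResolvent k with hΓ
  set τ := tauOR ω q e with hτ
  set μab : Measure ℝ := volume.restrict (Set.Icc a b) with hμ
  -- basic facts
  have hΓm : Measurable fun p : ℝ × ℝ => Γ p.1 p.2 := volterraResolvent_measurable k hk_cont
  have hΓnn : ∀ t s : ℝ, s ≤ t → 0 ≤ Γ t s := volterraResolvent_nonneg k hk_nonneg
  -- bound for k and Γ
  obtain ⟨c₀, hc₀⟩ := (isCompact_Icc.prod isCompact_Icc).exists_bound_of_continuousOn
    (s := Set.Icc a b ×ˢ Set.Icc a b) hk_cont.continuousOn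
  set ck := max c₀ 0 with hck
  have hck0 : 0 ≤ ck := le_max_right _ _
  set CΓ : ℝ := ∑' m : ℕ, ck^(m+1) * (b-a)^m / m.factorial with hCΓ
  have hba : (0:ℝ) ≤ b - a := by linarith
  have hCΓ0 : 0 ≤ CΓ := tsum_nonneg fun m => by positivity
  have hΓb : ∀ t ∈ Set.Icc a b, ∀ s ∈ Set.Icc a b, |Γ t s| ≤ CΓ := by
    intro t ht s hs
    apply volterraResolvent_bound k hk_cont ck hck0 t s
    · intro x hx y hy
      have hsub : Set.uIcc s t ⊆ Set.Icc a b := Set.uIcc_subset_Icc hs ht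
      have := hc₀ (x, y) (Set.mk_mem_prod (hsub hx) (hsub hy))
      rw [Real.norm_eq_abs] at this
      exact le_trans this (le_max_left _ _)
    · rw [abs_le]
      constructor <;> [linarith [ht.1, ht.2, hs.1, hs.2]; linarith [ht.1, ht.2, hs.1, hs.2]]
  -- tau facts
  have hτc : Continuous τ := tau_continuous ω hn q e hω0 hω_cont hω_mono hω_subadd
  have hτnn : ∀ t, 0 ≤ τ t := tau_nonneg ω hn q e hω_nonneg he
  obtain ⟨cτ, hcτ⟩ := isCompact_Icc.exists_bound_of_continuousOn (s := Set.Icc a b)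
    hτc.continuousOn
  have hτb : ∀ x ∈ Set.Icc a b, |τ x| ≤ max cτ 0 := fun x hx => by
    have := hcτ x hx; rw [Real.norm_eq_abs] at this; exact le_trans this (le_max_left _ _)
  have hτb0 : (0:ℝ) ≤ max cτ 0 := le_max_right _ _
  -- the integral-operator facts
  have hBaesm : ∀ g : ℝ → ℝ, Measurable g →
      AEStronglyMeasurable (fun t : ℝ => ∫ s in a..t, Γ t s * g s) μab := by
    intro g hg
    have hsm := sm_param a (F := fun t s => Γ t s * g s)
      (by exact hΓm.mul (hg.comp measurable_snd))
    apply hsm.aestronglyMeasurable.congr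
    filter_upwards [ae_restrict_mem measurableSet_Icc] with t ht
    rw [intervalIntegral.integral_of_le ht.1]
  have hBaesmIoc : ∀ g : ℝ → ℝ, Measurable g →
      AEStronglyMeasurable (fun t : ℝ => ∫ s in a..t, Γ t s * g s)
        (volume.restrict (Set.Ioc a b)) := by
    intro g hg
    exact (hBaesm g hg).mono_measure (Measure.restrict_mono Set.Ioc_subset_Icc_self le_rfl)
  have hBbdd : ∀ (g : ℝ → ℝ) (c : ℝ), 0 ≤ c → (∀ x ∈ Set.Icc a b, |g x| ≤ c) →
      ∀ t ∈ Set.Icc a b, |∫ s in a..t, Γ t s * g s| ≤ CΓ * c * (b - a) := by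
    intro g c hc hgb t ht
    have h1 : ∀ x ∈ Set.uIoc a t, ‖Γ t x * g x‖ ≤ CΓ * c := by
      intro x hx
      rw [Set.uIoc_of_le ht.1] at hx
      have hxI : x ∈ Set.Icc a b := ⟨hx.1.le, le_trans hx.2 ht.2⟩
      rw [Real.norm_eq_abs, abs_mul]
      exact mul_le_mul (hΓb t ht x hxI) (hgb x hxI) (abs_nonneg _) hCΓ0
    have h2 := intervalIntegral.norm_integral_le_of_norm_le_const h1
    rw [Real.norm_eq_abs] at h2
    refine le_trans h2 ?_
    rw [abs_of_nonneg (by linarith [ht.1] : (0:ℝ) ≤ t - a)]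
    have h3 : t - a ≤ b - a := by linarith [ht.2]
    exact mul_le_mul_of_nonneg_left h3 (by positivity)
  -- facts about A τ
  have hBτnn : ∀ t ∈ Set.Icc a b, (0:ℝ) ≤ ∫ s in a..t, Γ t s * τ s := by
    intro t ht
    exact intervalIntegral.integral_nonneg ht.1
      (fun u hu => mul_nonneg (hΓnn t u hu.2) (hτnn u))
  have hBτaesm := hBaesm τ hτc.measurable
  have hBτbdd := hBbdd τ (max cτ 0) hτb0 hτb
  have hAτint : IntegrableOn (fun t => τ t + ∫ s in a..t, Γ t s * τ s) (Set.Icc a b) := by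
    apply (hτc.integrableOn_Icc).add
    exact integrableOn_of_bdd measurableSet_Icc measure_Icc_lt_top.ne hBτaesm hBτbdd
  have hAτnn : ∀ t ∈ Set.Icc a b, (0:ℝ) ≤ τ t + ∫ s in a..t, Γ t s * τ s :=
    fun t ht => add_nonneg (hτnn t) (hBτnn t ht)
  -- boundedness of s ↦ ∫ t in s..b, Γ t s
  have hGbdd : ∀ x ∈ Set.Icc a b, |∫ t in x..b, Γ t x| ≤ CΓ * (b - a) := by
    intro x hx
    have h1 : ∀ y ∈ Set.uIoc x b, ‖Γ y x‖ ≤ CΓ := by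
      intro y hy
      rw [Set.uIoc_of_le hx.2] at hy
      exact (Real.norm_eq_abs _) ▸ hΓb y ⟨le_trans hx.1 hy.1.le, hy.2⟩ x hx
    have h2 := intervalIntegral.norm_integral_le_of_norm_le_const h1
    rw [Real.norm_eq_abs] at h2
    refine le_trans h2 ?_
    rw [abs_of_nonneg (by linarith [hx.2] : (0:ℝ) ≤ b - x)]
    exact mul_le_mul_of_nonneg_left (by linarith [hx.1]) hCΓ0
  -- the value identity
  have hval : (∫ t in a..b, (τ t + ∫ s in a..t, Γ t s * τ s))
      = ∫ s in a..b, (1 + ∫ t in s..b, Γ t s) * τ s := by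
    have h1 : IntervalIntegrable τ volume a b := hτc.intervalIntegrable a b
    have h2 : IntervalIntegrable (fun t => ∫ s in a..t, Γ t s * τ s) volume a b := by
      rw [intervalIntegrable_iff_integrableOn_Ioc_of_le hab]
      exact integrableOn_of_bdd measurableSet_Ioc measure_Ioc_lt_top.ne
        (hBaesmIoc τ hτc.measurable)
        (fun x hx => hBτbdd x (Set.Ioc_subset_Icc_self hx))
    have h4 : IntervalIntegrable (fun s => (∫ t in s..b, Γ t s) * τ s) volume a b := by
      rw [intervalIntegrable_iff_integrableOn_Ioc_of_le hab]
      apply integrableOn_of_bdd measurableSet_Ioc measure_Ioc_lt_top.ne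
        (c := CΓ * (b - a) * max cτ 0)
      · apply AEStronglyMeasurable.mul _ hτc.aestronglyMeasurable
        have hsm := sm_param' b (F := fun s t => Γ t s)
          (by exact hΓm.comp measurable_swap)
        apply hsm.aestronglyMeasurable.congr
        filter_upwards [ae_restrict_mem measurableSet_Ioc] with s hs
        rw [intervalIntegral.integral_of_le hs.2]
      · intro x hx
        rw [abs_mul]
        exact mul_le_mul (hGbdd x (Set.Ioc_subset_Icc_self hx))
          (hτb x (Set.Ioc_subset_Icc_self hx)) (abs_nonneg _) (by positivity)
    rw [intervalIntegral.integral_add h1 h2,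
      fubini_tri a b hab Γ hΓm CΓ hΓb τ hτc.measurable (max cτ 0) hτb,
      ← intervalIntegral.integral_add h1 h4]
    apply intervalIntegral.integral_congr
    intro s _
    ring
  set V : ℝ≥0∞ := ENNReal.ofReal (∫ s in a..b, (1 + ∫ t in s..b, Γ t s) * τ s) with hV
  -- continuity of elements of W on [a,b]
  have hWcont : ∀ f : ℝ → ℝ,
      (∀ t ∈ Set.Icc a b, ∀ t' ∈ Set.Icc a b, |f t - f t'| ≤ ω (dist t t')) →
      ContinuousOn f (Set.Icc a b) := by
    intro f hf x hx
    rw [ContinuousWithinAt, tendsto_iff_dist_tendsto_zero]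
    have hg : Filter.Tendsto (fun t => ω (dist t x)) (nhds x) (nhds 0) := by
      have hd : Filter.Tendsto (fun t : ℝ => dist t x) (nhds x) (nhdsWithin 0 (Set.Ici 0)) := by
        rw [tendsto_nhdsWithin_iff]
        refine ⟨?_, Filter.Eventually.of_forall fun t => Set.mem_Ici.2 dist_nonneg⟩
        have := (continuous_id.dist (continuous_const : Continuous fun _ : ℝ => x)).tendsto x
        simpa using this
      have hωc : Filter.Tendsto ω (nhdsWithin 0 (Set.Ici 0)) (nhds 0) := by
        have h0 := hω_cont 0 (Set.mem_Ici.2 le_rfl)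
        rw [ContinuousWithinAt, hω0] at h0
        exact h0
      exact hωc.comp hd
    refine squeeze_zero' (Filter.Eventually.of_forall fun t => dist_nonneg) ?_
      (hg.mono_left nhdsWithin_le_nhds)
    filter_upwards [self_mem_nhdsWithin] with t ht
    rw [Real.dist_eq]
    exact hf t ht x hx
  -- pointwise bound for members of W
  have hWbdd : ∀ f : ℝ → ℝ,
      (∀ t ∈ Set.Icc a b, ∀ t' ∈ Set.Icc a b, |f t - f t'| ≤ ω (dist t t')) →
      ∀ x ∈ Set.Icc a b, |f x| ≤ |f a| + ω (b - a) := by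
    intro f hf x hx
    have h1 : |f x - f a| ≤ ω (dist x a) := hf x hx a ⟨le_rfl, hab⟩
    have h2 : ω (dist x a) ≤ ω (b - a) := by
      apply hω_mono (Set.mem_Ici.2 dist_nonneg) (Set.mem_Ici.2 hba)
      rw [Real.dist_eq, abs_of_nonneg (by linarith [hx.1] : (0:ℝ) ≤ x - a)]
      linarith [hx.2]
    calc |f x| = |f a + (f x - f a)| := by ring_nf
      _ ≤ |f a| + |f x - f a| := abs_add_le _ _
      _ ≤ |f a| + ω (b - a) := by linarith
  -- THE KEY UPPER BOUND
  have key_upper : ∀ f : ℝ → ℝ,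
      (∀ t ∈ Set.Icc a b, ∀ t' ∈ Set.Icc a b, |f t - f t'| ≤ ω (dist t t')) →
      ∀ z : Fin n → ℝ, (∀ j, |z j - f (q j)| ≤ e j) →
      eLpNorm (fun t => (f t + ∫ s in a..t, Γ t s * f s)
        - (LmethOR ω q e z t + ∫ s in a..t, Γ t s * LmethOR ω q e z s)) 1 μab ≤ V := by
    intro f hf z hz
    have hfc := hWcont f hf
    have hfb := hWbdd f hf
    have hfb0 : (0:ℝ) ≤ |f a| + ω (b - a) := by
      have := hω_nonneg (b - a) hba
      positivity
    obtain ⟨j₀, -, hj₀⟩ := Finset.exists_max_image Finset.univ (fun j => |z j|)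
      ⟨⟨0, hn⟩, Finset.mem_univ _⟩
    have hLb : ∀ t, |LmethOR ω q e z t| ≤ |z j₀| :=
      Lmeth_bound ω hn q e z (|z j₀|) (fun j => hj₀ j (Finset.mem_univ j))
    have hLm : Measurable (LmethOR ω q e z) :=
      Lmeth_measurable ω hn q e hω0 hω_cont hω_mono hω_subadd z
    have hclose : ∀ t ∈ Set.Icc a b, |f t - LmethOR ω q e z t| ≤ τ t :=
      fun t ht => Lmeth_close ω hn q e a b hq f hf z hz t ht
    have hpt : ∀ t ∈ Set.Icc a b, |(f t + ∫ s in a..t, Γ t s * f s)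
        - (LmethOR ω q e z t + ∫ s in a..t, Γ t s * LmethOR ω q e z s)|
        ≤ τ t + ∫ s in a..t, Γ t s * τ s := by
      intro t ht
      have hIocsub : Set.Ioc a t ⊆ Set.Icc a b :=
        fun x hx => ⟨hx.1.le, le_trans hx.2 ht.2⟩
      have hΓtm : Measurable fun s => Γ t s :=
        hΓm.comp (measurable_const.prodMk measurable_id)
      have hif : IntervalIntegrable (fun s => Γ t s * f s) volume a t := by
        rw [intervalIntegrable_iff_integrableOn_Ioc_of_le ht.1]
        apply integrableOn_of_bdd measurableSet_Ioc measure_Ioc_lt_top.ne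
          (c := CΓ * (|f a| + ω (b - a)))
        · exact (hΓtm.aestronglyMeasurable).mul
            ((hfc.mono hIocsub).aestronglyMeasurable measurableSet_Ioc)
        · intro x hx
          rw [abs_mul]
          exact mul_le_mul (hΓb t ht x (hIocsub hx)) (hfb x (hIocsub hx))
            (abs_nonneg _) hCΓ0
      have hiL : IntervalIntegrable (fun s => Γ t s * LmethOR ω q e z s) volume a t := by
        rw [intervalIntegrable_iff_integrableOn_Ioc_of_le ht.1]
        apply integrableOn_of_bdd measurableSet_Ioc measure_Ioc_lt_top.ne
          (c := CΓ * |z j₀|)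
        · exact (hΓtm.aestronglyMeasurable).mul hLm.aestronglyMeasurable
        · intro x hx
          rw [abs_mul]
          exact mul_le_mul (hΓb t ht x (hIocsub hx)) (hLb x) (abs_nonneg _) hCΓ0
      have hiτ : IntervalIntegrable (fun s => Γ t s * τ s) volume a t := by
        rw [intervalIntegrable_iff_integrableOn_Ioc_of_le ht.1]
        apply integrableOn_of_bdd measurableSet_Ioc measure_Ioc_lt_top.ne
          (c := CΓ * max cτ 0)
        · exact (hΓtm.aestronglyMeasurable).mul hτc.aestronglyMeasurable
        · intro x hx
          rw [abs_mul]
          exact mul_le_mul (hΓb t ht x (hIocsub hx)) (hτb x (hIocsub hx))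
            (abs_nonneg _) hCΓ0
      have h0 : (f t + ∫ s in a..t, Γ t s * f s)
          - (LmethOR ω q e z t + ∫ s in a..t, Γ t s * LmethOR ω q e z s)
          = (f t - LmethOR ω q e z t) + ((∫ s in a..t, Γ t s * f s)
            - ∫ s in a..t, Γ t s * LmethOR ω q e z s) := by ring
      rw [h0, ← intervalIntegral.integral_sub hif hiL]
      refine le_trans (abs_add_le _ _) ?_
      have h2 : |∫ s in a..t, (Γ t s * f s - Γ t s * LmethOR ω q e z s)|
          ≤ ∫ s in a..t, Γ t s * τ s := by
        have h3 : ‖∫ s in a..t, (Γ t s * f s - Γ t s * LmethOR ω q e z s)‖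
            ≤ |∫ s in a..t, Γ t s * τ s| := by
          apply intervalIntegral.norm_integral_le_abs_of_norm_le _ hiτ
          filter_upwards [ae_restrict_mem measurableSet_uIoc] with x hx
          rw [Set.uIoc_of_le ht.1] at hx
          have hΓnn' : (0:ℝ) ≤ Γ t x := hΓnn t x hx.2
          have h4 : Γ t x * f x - Γ t x * LmethOR ω q e z x
              = Γ t x * (f x - LmethOR ω q e z x) := by ring
          rw [Real.norm_eq_abs, h4, abs_mul, abs_of_nonneg hΓnn']
          exact mul_le_mul_of_nonneg_left (hclose x (hIocsub hx)) hΓnn'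
        rwa [Real.norm_eq_abs, abs_of_nonneg (hBτnn t ht)] at h3
      have h5 := hclose t ht
      linarith
    calc eLpNorm (fun t => (f t + ∫ s in a..t, Γ t s * f s)
          - (LmethOR ω q e z t + ∫ s in a..t, Γ t s * LmethOR ω q e z s)) 1 μab
        ≤ ENNReal.ofReal (∫ t in a..b, (τ t + ∫ s in a..t, Γ t s * τ s)) :=
          elp_le a b hab hAτint hAτnn hpt
      _ = V := by rw [hval]
  -- MemLp of the recovery method
  have hmem : ∀ z : Fin n → ℝ, MemLp
      (fun t => LmethOR ω q e z t + ∫ s in a..t, Γ t s * LmethOR ω q e z s) 1 μab := by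
    intro z
    rw [memLp_one_iff_integrable]
    obtain ⟨j₀, -, hj₀⟩ := Finset.exists_max_image Finset.univ (fun j => |z j|)
      ⟨⟨0, hn⟩, Finset.mem_univ _⟩
    have hLb : ∀ t, |LmethOR ω q e z t| ≤ |z j₀| :=
      Lmeth_bound ω hn q e z (|z j₀|) (fun j => hj₀ j (Finset.mem_univ j))
    have hLm : Measurable (LmethOR ω q e z) :=
      Lmeth_measurable ω hn q e hω0 hω_cont hω_mono hω_subadd z
    apply Integrable.add
    · exact integrableOn_of_bdd measurableSet_Icc measure_Icc_lt_top.ne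
        hLm.aestronglyMeasurable (fun x _ => hLb x)
    · exact integrableOn_of_bdd measurableSet_Icc measure_Icc_lt_top.ne
        (hBaesm _ hLm) (hBbdd _ (|z j₀|) (abs_nonneg _) (fun x _ => hLb x))
  -- THE KEY LOWER BOUND
  have key_lower : ∀ Φ : (Fin n → ℝ) → ℝ → ℝ, AEStronglyMeasurable (Φ 0) μab →
      V ≤ ⨆ f ∈ {x : ℝ → ℝ |
          ∀ t ∈ Set.Icc a b, ∀ t' ∈ Set.Icc a b, |x t - x t'| ≤ ω (dist t t')},
        ⨆ z : Fin n → ℝ, ⨆ (_ : ∀ j, |z j - f (q j)| ≤ e j),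
          eLpNorm (fun t => (f t + ∫ s in a..t, Γ t s * f s) - Φ z t) 1 μab := by
    intro Φ hΦ0
    have hτW : τ ∈ {x : ℝ → ℝ |
        ∀ t ∈ Set.Icc a b, ∀ t' ∈ Set.Icc a b, |x t - x t'| ≤ ω (dist t t')} :=
      fun t _ t' _ => tau_lip ω hn q e hω_mono hω_subadd t t'
    have hmτ : (fun u => -τ u) ∈ {x : ℝ → ℝ |
        ∀ t ∈ Set.Icc a b, ∀ t' ∈ Set.Icc a b, |x t - x t'| ≤ ω (dist t t')} := by
      intro t _ t' _
      have : -τ t - -τ t' = -(τ t - τ t') := by ring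
      rw [this, abs_neg]
      exact tau_lip ω hn q e hω_mono hω_subadd t t'
    have hτqj : ∀ j, τ (q j) ≤ e j := by
      intro j
      have h1 := tau_le ω hn q e (q j) j
      rwa [dist_self, hω0, add_zero] at h1
    have hz0 : ∀ j, |(0 : Fin n → ℝ) j - τ (q j)| ≤ e j := by
      intro j
      simp only [Pi.zero_apply, zero_sub, abs_neg]
      rw [abs_of_nonneg (hτnn _)]
      exact hτqj j
    have hzm : ∀ j, |(0 : Fin n → ℝ) j - (fun u => -τ u) (q j)| ≤ e j := by
      intro j
      simp only [Pi.zero_apply, zero_sub, neg_neg]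
      rw [abs_of_nonneg (hτnn _)]
      exact hτqj j
    have h1 : eLpNorm (fun t => (τ t + ∫ s in a..t, Γ t s * τ s) - Φ 0 t) 1 μab
        ≤ ⨆ f ∈ {x : ℝ → ℝ |
            ∀ t ∈ Set.Icc a b, ∀ t' ∈ Set.Icc a b, |x t - x t'| ≤ ω (dist t t')},
          ⨆ z : Fin n → ℝ, ⨆ (_ : ∀ j, |z j - f (q j)| ≤ e j),
            eLpNorm (fun t => (f t + ∫ s in a..t, Γ t s * f s) - Φ z t) 1 μab :=
      le_iSup₂_of_le τ hτW (le_iSup₂_of_le (0 : Fin n → ℝ) hz0 le_rfl)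
    have h2 : eLpNorm (fun t => ((fun u => -τ u) t
          + ∫ s in a..t, Γ t s * (fun u => -τ u) s) - Φ 0 t) 1 μab
        ≤ ⨆ f ∈ {x : ℝ → ℝ |
            ∀ t ∈ Set.Icc a b, ∀ t' ∈ Set.Icc a b, |x t - x t'| ≤ ω (dist t t')},
          ⨆ z : Fin n → ℝ, ⨆ (_ : ∀ j, |z j - f (q j)| ≤ e j),
            eLpNorm (fun t => (f t + ∫ s in a..t, Γ t s * f s) - Φ z t) 1 μab :=
      le_iSup₂_of_le (fun u => -τ u) hmτ (le_iSup₂_of_le (0 : Fin n → ℝ) hzm le_rfl)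
    have heqneg : (fun t => ((fun u => -τ u) t
          + ∫ s in a..t, Γ t s * (fun u => -τ u) s) - Φ 0 t)
        = fun t => -(τ t + ∫ s in a..t, Γ t s * τ s) - Φ 0 t := by
      funext t
      have hs : (fun s => Γ t s * (fun u => -τ u) s) = fun s => -(Γ t s * τ s) := by
        funext s; dsimp only; ring
      dsimp only
      rw [hs, intervalIntegral.integral_neg]
      ring
    rw [heqneg] at h2
    have hAτaesm : AEStronglyMeasurable (fun t => τ t + ∫ s in a..t, Γ t s * τ s) μab :=
      hτc.aestronglyMeasurable.add hBτaesm
    have hF1 : AEStronglyMeasurable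
        (fun t => (τ t + ∫ s in a..t, Γ t s * τ s) - Φ 0 t) μab := hAτaesm.sub hΦ0
    have hF2 : AEStronglyMeasurable
        (fun t => -(τ t + ∫ s in a..t, Γ t s * τ s) - Φ 0 t) μab := hAτaesm.neg.sub hΦ0
    have hdiff : (fun t => (2:ℝ) * (τ t + ∫ s in a..t, Γ t s * τ s))
        = (fun t => (τ t + ∫ s in a..t, Γ t s * τ s) - Φ 0 t)
          - (fun t => -(τ t + ∫ s in a..t, Γ t s * τ s) - Φ 0 t) := by
      funext t
      simp only [Pi.sub_apply]
      ring
    have h3 : eLpNorm (fun t => (2:ℝ) * (τ t + ∫ s in a..t, Γ t s * τ s)) 1 μab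
        ≤ (⨆ f ∈ {x : ℝ → ℝ |
            ∀ t ∈ Set.Icc a b, ∀ t' ∈ Set.Icc a b, |x t - x t'| ≤ ω (dist t t')},
          ⨆ z : Fin n → ℝ, ⨆ (_ : ∀ j, |z j - f (q j)| ≤ e j),
            eLpNorm (fun t => (f t + ∫ s in a..t, Γ t s * f s) - Φ z t) 1 μab)
          + (⨆ f ∈ {x : ℝ → ℝ |
            ∀ t ∈ Set.Icc a b, ∀ t' ∈ Set.Icc a b, |x t - x t'| ≤ ω (dist t t')},
          ⨆ z : Fin n → ℝ, ⨆ (_ : ∀ j, |z j - f (q j)| ≤ e j),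
            eLpNorm (fun t => (f t + ∫ s in a..t, Γ t s * f s) - Φ z t) 1 μab) := by
      rw [hdiff]
      exact (eLpNorm_sub_le hF1 hF2 le_rfl).trans (add_le_add h1 h2)
    have h4 : eLpNorm (fun t => (2:ℝ) * (τ t + ∫ s in a..t, Γ t s * τ s)) 1 μab
        = 2 * eLpNorm (fun t => τ t + ∫ s in a..t, Γ t s * τ s) 1 μab := by
      have hsmul : (fun t => (2:ℝ) * (τ t + ∫ s in a..t, Γ t s * τ s))
          = (2:ℝ) • (fun t => τ t + ∫ s in a..t, Γ t s * τ s) := by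
        funext t; simp [smul_eq_mul]
      rw [hsmul, eLpNorm_const_smul]
      congr 1
      rw [← ofReal_norm]; simp
    have h5 : eLpNorm (fun t => τ t + ∫ s in a..t, Γ t s * τ s) 1 μab = V := by
      rw [elp_eq a b hab hAτint hAτnn, hval]
    rw [h4, h5, ← two_mul] at h3
    exact (ENNReal.mul_le_mul_iff_right two_ne_zero ENNReal.ofNat_ne_top).1 h3
  constructor
  · apply le_antisymm
    · have h := iInf_le (fun Φ : {Φ : (Fin n → ℝ) → ℝ → ℝ // ∀ z, MemLp (Φ z) 1 μab} =>
        ⨆ f ∈ {x : ℝ → ℝ |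
            ∀ t ∈ Set.Icc a b, ∀ t' ∈ Set.Icc a b, |x t - x t'| ≤ ω (dist t t')},
          ⨆ z : Fin n → ℝ, ⨆ (_ : ∀ j, |z j - f (q j)| ≤ e j),
            eLpNorm (fun t => (f t + ∫ s in a..t, Γ t s * f s) - Φ.1 z t) 1 μab)
        ⟨fun z t => LmethOR ω q e z t + ∫ s in a..t, Γ t s * LmethOR ω q e z s, hmem⟩
      exact h
    · apply le_iInf
      rintro ⟨Φ, hΦ⟩
      refine le_trans ?_ (key_lower Φ (hΦ 0).aestronglyMeasurable)
      apply iSup₂_le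
      intro f hf
      apply iSup_le
      intro z
      apply iSup_le
      intro hz
      exact key_upper f hf z hz
  · apply le_antisymm
    · apply iSup₂_le
      intro f hf
      apply iSup_le
      intro z
      apply iSup_le
      intro hz
      exact key_upper f hf z hz
    · exact key_lower _ (hmem 0).aestronglyMeasurable

/-- Optimal recovery of the solution operator of a linear Volterra integral equation of
the second kind in `L¹`. -/
theorem optimal_recovery_volterra
    (a b : ℝ) (hab : a ≤ b)
    (k : ℝ → ℝ → ℝ) (hk_cont : Continuous fun p : ℝ × ℝ => k p.1 p.2)
    (hk_nonneg : ∀ t s, 0 ≤ k t s)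
    (ω : ℝ → ℝ) (hω0 : ω 0 = 0)
    (hω_cont : ContinuousOn ω (Set.Ici 0))
    (hω_mono : MonotoneOn ω (Set.Ici 0))
    (hω_subadd : ∀ s t : ℝ, 0 ≤ s → 0 ≤ t → ω (s + t) ≤ ω s + ω t)
    (hω_nonneg : ∀ s : ℝ, 0 ≤ s → 0 ≤ ω s)
    {n : ℕ} (hn : 0 < n) (q : Fin n → ℝ) (hq : ∀ j, q j ∈ Set.Icc a b)
    (e : Fin n → ℝ) (he : ∀ j, 0 ≤ e j) :
    let Γ : ℝ → ℝ → ℝ := volterraResolvent k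
    -- the solution operator of the Volterra equation `x(t) = f(t) + ∫_a^t k(t,s) x(s) ds`
    let A : (ℝ → ℝ) → ℝ → ℝ := fun f t => f t + ∫ s in a..t, Γ t s * f s
    let W : Set (ℝ → ℝ) :=
      {x | ∀ t ∈ Set.Icc a b, ∀ t' ∈ Set.Icc a b, |x t - x t'| ≤ ω (dist t t')}
    let μab : Measure ℝ := volume.restrict (Set.Icc a b)
    let Err : ((Fin n → ℝ) → ℝ → ℝ) → ℝ≥0∞ := fun Φ =>
      ⨆ f ∈ W, ⨆ z : Fin n → ℝ, ⨆ (_ : ∀ j, |z j - f (q j)| ≤ e j),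
        eLpNorm (fun t => A f t - Φ z t) 1 μab
    let Φ₀ : (Fin n → ℝ) → ℝ → ℝ := fun z => A (LmethOR ω q e z)
    (⨅ Φ : {Φ : (Fin n → ℝ) → ℝ → ℝ // ∀ z, MemLp (Φ z) 1 μab}, Err Φ.1) = Err Φ₀ ∧
      Err Φ₀ = ENNReal.ofReal (∫ s in a..b, (1 + ∫ t in s..b, Γ t s) * tauOR ω q e s) := by
  intro Γ A W μab Err Φ₀
  exact main_core a b hab k hk_cont hk_nonneg ω hω0 hω_cont hω_mono hω_subadd hω_nonneg
    hn q hq e he Γ rfl A rfl W rfl μab rfl Err rfl Φ₀ rfl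
end
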